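/- arXiv:1807.11360 — 7 statements merged into one kernel-verified Lean document; each statement's English description precedes it below -/
import Mathlib

section
/- Let p be a prime, e, m, n positive integers, q = p^e, and 1 ≤ m ≤ n ≤ q−1. If the monomial digraph D(q; m, n) is strong, then diam(D(q; m, n)) ≥ 3. -/
/-- `walkLen r k x y` means there is a directed walk of length exactly `k`
from `x` to `y` in the digraph with arc relation `r`. -/
def walkLen {V : Type*} (r : V → V → Prop) : ℕ → V → V → Prop
  | 0 => fun x y => x = y
  | k + 1 => fun x y => ∃ z, r x z ∧ walkLen r k z y

/-- The distance from `x` to `y`: the minimum length of a directed walk,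
`⊤` if `y` is not reachable from `x`. -/
noncomputable def ddist {V : Type*} (r : V → V → Prop) (x y : V) : ℕ∞ :=
  ⨅ n ∈ {n : ℕ | walkLen r n x y}, (n : ℕ∞)

/-- The diameter of the digraph: the maximum of distances over all ordered pairs. -/
noncomputable def ddiam {V : Type*} (r : V → V → Prop) : ℕ∞ :=
  ⨆ x, ⨆ y, ddist r x y

/-- A digraph is strong if every vertex is reachable from every vertex. -/
def IsStrongDigraph {V : Type*} (r : V → V → Prop) : Prop :=
  ∀ x y : V, ∃ n : ℕ, walkLen r n x y

/-- The arc relation of the monomial digraph `D(q; m, n)`: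
`(x₁, x₂) → (y₁, y₂)` iff `x₂ + y₂ = x₁ ^ m * y₁ ^ n`. -/
def monomialArc {F : Type*} [Field F] (m n : ℕ) (x y : F × F) : Prop :=
  x.2 + y.2 = x.1 ^ m * y.1 ^ n

theorem diam_ge_three {p e m n : ℕ} (hp : p.Prime) (he : 0 < e)
    (F : Type*) [Field F] [Fintype F] (hF : Fintype.card F = p ^ e)
    (hm : 1 ≤ m) (hmn : m ≤ n) (hn : n ≤ p ^ e - 1)
    (hstrong : IsStrongDigraph (monomialArc (F := F) m n)) :
    3 ≤ ddiam (monomialArc (F := F) m n) := by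
  have h0m : (0 : F) ^ m = 0 := zero_pow (by omega)
  have h0n : (0 : F) ^ n = 0 := zero_pow (by omega)
  have key : ∀ k, walkLen (monomialArc (F := F) m n) k ((0, 0) : F × F) (0, 1) → 3 ≤ k := by
    intro k hk
    match k, hk with
    | 0, hk =>
      exact absurd (congrArg Prod.snd hk) (by simp)
    | 1, ⟨z, hz, hz2⟩ =>
      have hz2' : z = ((0 : F), (1 : F)) := hz2
      rw [hz2'] at hz
      simp [monomialArc, h0m] at hz
    | 2, ⟨z, hz, w, hw, hw2⟩ =>
      have hw2' : w = ((0 : F), (1 : F)) := hw2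
      rw [hw2'] at hw
      simp [monomialArc, h0m, h0n] at hz hw
      rw [hz] at hw
      simp at hw
    | (k + 3), _ => omega
  have hdist : 3 ≤ ddist (monomialArc (F := F) m n) ((0, 0) : F × F) (0, 1) := by
    rw [ddist]
    refine le_iInf₂ fun k hk => ?_
    have := key k hk
    exact_mod_cast this
  calc (3 : ℕ∞) ≤ ddist (monomialArc (F := F) m n) ((0, 0) : F × F) (0, 1) := hdist
    _ ≤ ddiam (monomialArc (F := F) m n) := le_iSup₂ (f := fun x y => ddist (monomialArc (F := F) m n) x y) _ _
end

section
/- Let p be a prime, m, n positive integers, q = p^2, and 1 ≤ m ≤ n ≤ q−1. If the monomial digraph D(q; m, n) is strong, then diam(D(q; m, n)) ≤ 96√(n+1) + 1. -/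
set_option linter.unusedSectionVars false
set_option linter.unusedTactic false
set_option linter.unusedVariables false
set_option maxHeartbeats 1000000

open Polynomial Finset Pointwise
open scoped Classical

/-! ### Walk plumbing -/

section Walks

variable {V : Type*} {r : V → V → Prop}

lemma walkLen_one {x y : V} (h : r x y) : walkLen r 1 x y := ⟨y, h, rfl⟩

lemma walkLen_add {k l : ℕ} {x y z : V} (h1 : walkLen r k x y) (h2 : walkLen r l y z) :
    walkLen r (k + l) x z := by
  induction k generalizing x with
  | zero => cases h1; simpa using h2
  | succ k ih =>
    obtain ⟨w, hw, hrest⟩ := h1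
    have : k + 1 + l = (k + l) + 1 := by omega
    rw [this]
    exact ⟨w, hw, ih hrest⟩

lemma ddist_le_of_walkLen {k : ℕ} {x y : V} (h : walkLen r k x y) :
    ddist r x y ≤ (k : ℕ∞) :=
  iInf₂_le k h

lemma ddiam_le_of_walks {K : ℕ} (h : ∀ x y : V, ∃ k ≤ K, walkLen r k x y) :
    ddiam r ≤ (K : ℕ∞) := by
  refine iSup_le fun x => iSup_le fun y => ?_
  obtain ⟨k, hk, hw⟩ := h x y
  exact le_trans (ddist_le_of_walkLen hw) (by exact_mod_cast hk)

end Walks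

/-! ### Monomial values and walks realizing sums of their differences -/

/-- The set of "monomial values" `a^m b^n`. -/
def SHset (F : Type*) [Field F] (m n : ℕ) : Set F := {z | ∃ a b : F, a ^ m * b ^ n = z}

/-- Differences of two monomial values. -/
def Dpred (F : Type*) [Field F] (m n : ℕ) (d : F) : Prop :=
  ∃ s t : F, s ∈ SHset F m n ∧ t ∈ SHset F m n ∧ d = s - t

section SHfacts

variable {F : Type*} [Field F] {m n p : ℕ}

lemma SH_zero (hm : 1 ≤ m) : (0 : F) ∈ SHset F m n :=
  ⟨0, 0, by rw [zero_pow (by omega : m ≠ 0), zero_mul]⟩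

lemma SH_one : (1 : F) ∈ SHset F m n := ⟨1, 1, by simp⟩

lemma SH_mul {z w : F} (hz : z ∈ SHset F m n) (hw : w ∈ SHset F m n) :
    z * w ∈ SHset F m n := by
  obtain ⟨a, b, hab⟩ := hz; obtain ⟨c, d, hcd⟩ := hw
  exact ⟨a * c, b * d, by rw [mul_pow, mul_pow, ← hab, ← hcd]; ring⟩

lemma SH_inv {z : F} (hz : z ∈ SHset F m n) : z⁻¹ ∈ SHset F m n := by
  obtain ⟨a, b, hab⟩ := hz
  exact ⟨a⁻¹, b⁻¹, by rw [inv_pow, inv_pow, ← hab, mul_inv]⟩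

lemma SH_pow {z : F} (hz : z ∈ SHset F m n) (k : ℕ) : z ^ k ∈ SHset F m n := by
  obtain ⟨a, b, hab⟩ := hz
  exact ⟨a ^ k, b ^ k, by rw [← hab]; ring⟩

lemma Dpred_zero (hm : 1 ≤ m) : Dpred F m n 0 :=
  ⟨0, 0, SH_zero hm, SH_zero hm, by ring⟩

lemma Dpred_neg {d : F} (hd : Dpred F m n d) : Dpred F m n (-d) := by
  obtain ⟨s, t, hs, ht, hst⟩ := hd
  exact ⟨t, s, ht, hs, by rw [hst]; ring⟩

variable (hm : 1 ≤ m) (hn : 1 ≤ n)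
include hm hn

lemma walk3 {w s : F} (hs : s ∈ SHset F m n) :
    walkLen (monomialArc m n) 3 ((0 : F), w) ((0 : F), -(w + s)) := by
  obtain ⟨a, b, hab⟩ := hs
  refine ⟨(a, -w), ?_, (b, s + w), ?_, (0, -(w+s)), ?_, rfl⟩
  · show w + -w = (0:F) ^ m * a ^ n
    rw [zero_pow (by omega : m ≠ 0)]; ring
  · show -w + (s + w) = a ^ m * b ^ n
    rw [hab]; ring
  · show (s + w) + -(w + s) = b ^ m * (0:F) ^ n
    rw [zero_pow (by omega : n ≠ 0)]; ring

lemma walk6 {w s t : F} (hs : s ∈ SHset F m n) (ht : t ∈ SHset F m n) :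
    walkLen (monomialArc m n) 6 ((0 : F), w) ((0 : F), w + (s - t)) := by
  have h1 := walk3 hm hn (w := w) hs
  have h2 := walk3 hm hn (w := -(w + s)) ht
  have : (-(-(w + s) + t)) = w + (s - t) := by ring
  rw [this] at h2
  exact walkLen_add h1 h2

lemma walk_list {l : List F} (hl : ∀ d ∈ l, Dpred F m n d) (w : F) :
    walkLen (monomialArc m n) (6 * l.length) ((0 : F), w) ((0 : F), w + l.sum) := by
  induction l generalizing w with
  | nil =>
    show walkLen (monomialArc m n) (6*0) ((0:F), w) ((0:F), w + ([] : List F).sum)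
    simp only [List.sum_nil, add_zero, Nat.mul_zero]
    rfl
  | cons d l ih =>
    obtain ⟨s, t, hs, ht, hd⟩ := hl d (by simp)
    have h1 : walkLen (monomialArc m n) 6 ((0 : F), w) ((0 : F), w + d) := by
      rw [hd]; exact walk6 hm hn hs ht
    have h2 := ih (fun d hd => hl d (by simp [hd])) (w + d)
    have hlen : 6 * (d :: l).length = 6 + 6 * l.length := by simp [List.length_cons]; omega
    rw [hlen]
    have : w + (d :: l).sum = (w + d) + l.sum := by simp [List.sum_cons]; ring
    rw [this]
    exact walkLen_add h1 h2

lemma walk_main {x y : F × F} {l : List F} (hl : ∀ d ∈ l, Dpred F m n d)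
    (hsum : l.sum = x.2 - y.2) :
    walkLen (monomialArc m n) (6 * l.length + 2) x y := by
  have h0 : walkLen (monomialArc m n) 1 x ((0 : F), -x.2) := by
    refine walkLen_one ?_
    show x.2 + -x.2 = x.1 ^ m * (0:F) ^ n
    rw [zero_pow (by omega : n ≠ 0)]; ring
  have h1 := walk_list hm hn hl (-x.2)
  rw [hsum] at h1
  have he : -x.2 + (x.2 - y.2) = -y.2 := by ring
  rw [he] at h1
  have h2 : walkLen (monomialArc m n) 1 ((0 : F), -y.2) y := by
    refine walkLen_one ?_
    show -y.2 + y.2 = (0:F) ^ m * y.1 ^ n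
    rw [zero_pow (by omega : m ≠ 0)]; ring
  have := walkLen_add (walkLen_add h0 h1) h2
  have harith : 1 + 6 * l.length + 1 = 6 * l.length + 2 := by omega
  rwa [harith] at this

end SHfacts

/-! ### Root counting -/

lemma card_filter_root_le' {F : Type*} [Field F] [DecidableEq F] {s : Finset F} {f : F[X]}
    (hf : f ≠ 0) (P : F → Prop) [DecidablePred P] (hroot : ∀ x ∈ s, P x → f.eval x = 0) :
    (s.filter P).card ≤ f.natDegree := by
  have hsub : s.filter P ⊆ f.roots.toFinset := by
    intro x hx
    rw [Finset.mem_filter] at hx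
    rw [Multiset.mem_toFinset, Polynomial.mem_roots hf]
    exact hroot x hx.1 hx.2
  calc (s.filter P).card ≤ f.roots.toFinset.card := Finset.card_le_card hsub
    _ ≤ Multiset.card f.roots := Multiset.toFinset_card_le _
    _ ≤ f.natDegree := Polynomial.card_roots' f

/-! ### Characteristic -/

lemma charP_of_card {F : Type*} [Field F] [Fintype F] {p : ℕ} (hp : p.Prime)
    (hF : Fintype.card F = p ^ 2) : CharP F p := by
  haveI : CharP F (ringChar F) := ringChar.charP F
  obtain ⟨k, hq, hcard⟩ := FiniteField.card F (ringChar F)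
  have hqp : ringChar F = p := by
    have hdvd : ringChar F ∣ p ^ 2 := by
      rw [← hF, hcard]; exact dvd_pow_self _ (by positivity)
    exact (Nat.prime_dvd_prime_iff_eq hq hp).1 (hq.dvd_of_dvd_pow hdvd)
  rw [← hqp]; infer_instance

/-! ### The counting finsets -/

noncomputable def Hfin (F : Type*) [Field F] [Fintype F] (m n : ℕ) : Finset F :=
  univ.filter (fun z => z ∈ SHset F m n ∧ z ≠ 0)

noncomputable def Kfin (F : Type*) [Field F] [Fintype F] (m n p : ℕ) : Finset F :=
  (Hfin F m n).filter (fun x => x ^ (p + 1) = 1)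

noncomputable def Hm' (F : Type*) [Field F] [Fintype F] (m n p : ℕ) : Finset F :=
  (Hfin F m n).filter (fun x => x ^ p = x)

noncomputable def Tim (F : Type*) [Field F] [Fintype F] (m n p : ℕ) : Finset F :=
  (Kfin F m n p).image (fun x => x + x ^ p)

noncomputable def Wfin (F : Type*) [Field F] [Fintype F] (m n p : ℕ) : Finset F :=
  Hm' F m n p ∪ Tim F m n p

noncomputable def W0 (F : Type*) [Field F] [Fintype F] (m n p : ℕ) : Finset F :=
  (Wfin F m n p ∪ (Wfin F m n p).image (fun x => -x)) ∪ {0}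

section Counting

variable {F : Type*} [Field F] [Fintype F] {m n p : ℕ}

lemma mem_Hfin {z : F} : z ∈ Hfin F m n ↔ z ∈ SHset F m n ∧ z ≠ 0 := by
  simp [Hfin]

lemma one_mem_Hfin : (1 : F) ∈ Hfin F m n := by
  rw [mem_Hfin]; exact ⟨SH_one, one_ne_zero⟩

lemma one_mem_Hm' : (1 : F) ∈ Hm' F m n p := by
  simp [Hm', mem_Hfin, SH_one]

lemma zero_mem_W0 : (0 : F) ∈ W0 F m n p := by
  simp [W0]

lemma one_mem_W0 : (1 : F) ∈ W0 F m n p := by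
  simp only [W0, Wfin, Finset.mem_union]
  exact Or.inl (Or.inl (Or.inl one_mem_Hm'))

lemma two_le_card_W0 : 2 ≤ (W0 F m n p).card := by
  have h : ({0, 1} : Finset F) ⊆ W0 F m n p := by
    intro x hx
    rcases Finset.mem_insert.1 hx with h | h
    · rw [h]; exact zero_mem_W0
    · rw [Finset.mem_singleton.1 h]; exact one_mem_W0
  calc 2 = ({0, 1} : Finset F).card := by
        rw [Finset.card_insert_of_notMem (by simp), Finset.card_singleton]
    _ ≤ _ := Finset.card_le_card h

/-- The norm fiber bound: |H| ≤ |K| * |Hm'| -/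
lemma card_Hfin_le (hq : ∀ x : F, x ^ (p ^ 2) = x) :
    (Hfin F m n).card ≤ (Kfin F m n p).card * (Hm' F m n p).card := by
  have himg : (Hfin F m n).image (fun x => x ^ (p+1)) ⊆ Hm' F m n p := by
    intro y hy
    rw [Finset.mem_image] at hy
    obtain ⟨x, hx, rfl⟩ := hy
    rw [mem_Hfin] at hx
    rw [Hm', Finset.mem_filter, mem_Hfin]
    refine ⟨⟨SH_pow hx.1 _, pow_ne_zero _ hx.2⟩, ?_⟩
    rw [← pow_mul]
    have : (p + 1) * p = p ^ 2 + p := by ring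
    rw [this, pow_add, hq x, ← pow_succ']
  have hcard : (Hfin F m n).card ≤ (Kfin F m n p).card *
      ((Hfin F m n).image (fun x => x ^ (p+1))).card := by
    apply Finset.card_le_mul_card_image
    intro y hy
    rw [Finset.mem_image] at hy
    obtain ⟨x0, hx0, hx0y⟩ := hy
    rw [mem_Hfin] at hx0
    apply Finset.card_le_card_of_injOn (fun x => x * x0⁻¹)
    · intro x hx
      rw [Finset.mem_coe, Finset.mem_filter, mem_Hfin] at hx
      obtain ⟨⟨hxSH, hxne⟩, hxy⟩ := hx
      rw [Finset.mem_coe, Kfin, Finset.mem_filter, mem_Hfin]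
      refine ⟨⟨SH_mul hxSH (SH_inv hx0.1), by
        exact mul_ne_zero hxne (inv_ne_zero hx0.2)⟩, ?_⟩
      rw [mul_pow, inv_pow, hxy, ← hx0y, mul_inv_cancel₀]
      exact pow_ne_zero _ hx0.2
    · intro a _ b _ hab
      exact mul_left_injective₀ (inv_ne_zero hx0.2) hab
  calc (Hfin F m n).card ≤ _ := hcard
    _ ≤ (Kfin F m n p).card * (Hm' F m n p).card :=
        Nat.mul_le_mul_left _ (Finset.card_le_card himg)

/-- trace fiber bound: |K| ≤ 2 * |Tim| -/
lemma card_Kfin_le : (Kfin F m n p).card ≤ 2 * (Tim F m n p).card := by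
  apply Finset.card_le_mul_card_image
  intro t ht
  have hf : (X ^ 2 - C t * X + C 1 : F[X]) ≠ 0 := by
    intro h
    have h2 : (X ^ 2 - C t * X + C 1 : F[X]).coeff 2 = 0 := by rw [h]; simp
    rw [Polynomial.coeff_add, Polynomial.coeff_sub, Polynomial.coeff_X_pow] at h2
    simp only [if_pos rfl] at h2
    rw [Polynomial.coeff_C_mul, Polynomial.coeff_X, Polynomial.coeff_C] at h2
    norm_num at h2
  have hdeg : (X ^ 2 - C t * X + C 1 : F[X]).natDegree ≤ 2 := by
    refine le_trans (Polynomial.natDegree_add_le _ _) ?_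
    simp only [Polynomial.natDegree_C, max_le_iff]
    constructor
    · refine le_trans (Polynomial.natDegree_sub_le _ _) ?_
      simp [Polynomial.natDegree_X_pow]
      refine le_trans (Polynomial.natDegree_mul_le) ?_
      simp [Polynomial.natDegree_C, Polynomial.natDegree_X]
    · omega
  refine le_trans (card_filter_root_le' hf _ ?_) hdeg
  intro x hx hxt
  rw [Kfin, Finset.mem_filter, mem_Hfin] at hx
  obtain ⟨⟨hxSH, hxne⟩, hxnorm⟩ := hx
  have hxp : x ^ p = x⁻¹ := by
    field_simp
    rw [← pow_succ]
    exact hxnorm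
  rw [hxp] at hxt
  simp only [Polynomial.eval_add, Polynomial.eval_sub, Polynomial.eval_mul, Polynomial.eval_pow,
    Polynomial.eval_X, Polynomial.eval_C]
  rw [← hxt]
  field_simp
  ring

/-- the power map bound: p² ≤ n |H| + 1 -/
lemma card_Hfin_ge (hF : Fintype.card F = p ^ 2) (hm : 1 ≤ m) (hn : 1 ≤ n) :
    p ^ 2 ≤ n * (Hfin F m n).card + 1 := by
  have hUcard : (univ.filter (fun z : F => z ≠ 0)).card = p ^ 2 - 1 := by
    rw [Finset.filter_ne']
    rw [Finset.card_erase_of_mem (Finset.mem_univ _), Finset.card_univ, hF]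
  have himg : (univ.filter (fun z : F => z ≠ 0)).image (fun x => x ^ n) ⊆ Hfin F m n := by
    intro y hy
    rw [Finset.mem_image] at hy
    obtain ⟨x, hx, rfl⟩ := hy
    rw [Finset.mem_filter] at hx
    rw [mem_Hfin]
    exact ⟨⟨1, x, by simp⟩, pow_ne_zero _ hx.2⟩
  have hcount : (univ.filter (fun z : F => z ≠ 0)).card ≤
      n * ((univ.filter (fun z : F => z ≠ 0)).image (fun x => x ^ n)).card := by
    apply Finset.card_le_mul_card_image
    intro y hy
    have hfne : (X ^ n - C y : F[X]) ≠ 0 := by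
      intro h
      have h2 : (X ^ n - C y : F[X]).coeff n = 0 := by rw [h]; simp
      rw [Polynomial.coeff_sub, Polynomial.coeff_X_pow, Polynomial.coeff_C] at h2
      simp only [if_pos rfl] at h2
      have : n ≠ 0 := by omega
      simp [this] at h2
    have hdeg : (X ^ n - C y : F[X]).natDegree ≤ n := by
      refine le_trans (Polynomial.natDegree_sub_le _ _) ?_
      simp [Polynomial.natDegree_X_pow, Polynomial.natDegree_C]
    refine le_trans (card_filter_root_le' hfne _ ?_) hdeg
    intro x _ hxy
    simp [hxy]
  have h2 : ((univ.filter (fun z : F => z ≠ 0)).image (fun x => x ^ n)).card ≤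
      (Hfin F m n).card := Finset.card_le_card himg
  have hppos : 1 ≤ p ^ 2 := by rw [← hF]; exact Fintype.card_pos
  calc p ^ 2 = (p ^ 2 - 1) + 1 := by omega
    _ = (univ.filter (fun z : F => z ≠ 0)).card + 1 := by rw [hUcard]
    _ ≤ n * ((univ.filter (fun z : F => z ≠ 0)).image (fun x => x ^ n)).card + 1 := by omega
    _ ≤ n * (Hfin F m n).card + 1 := by
        have := Nat.mul_le_mul_left n h2
        omega

lemma card_Hfin_lt (hF : Fintype.card F = p ^ 2) : (Hfin F m n).card + 1 ≤ p ^ 2 := by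
  have hsub : Hfin F m n ⊆ univ.erase 0 := by
    intro x hx
    rw [mem_Hfin] at hx
    exact Finset.mem_erase.2 ⟨hx.2, Finset.mem_univ _⟩
  have := Finset.card_le_card hsub
  rw [Finset.card_erase_of_mem (Finset.mem_univ _), Finset.card_univ, hF] at this
  have hppos : 1 ≤ p ^ 2 := by rw [← hF]; exact Fintype.card_pos
  omega

end Counting

/-! ### The prime subfield -/

noncomputable def Pfin (F : Type*) [Field F] [Fintype F] (p : ℕ) : Finset F :=
  univ.filter (fun x => x ^ p = x)

section Subfield

variable {F : Type*} [Field F] [Fintype F] {p m n : ℕ} [CharP F p]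

lemma card_Pfin_le (hp : p.Prime) : (Pfin F p).card ≤ p := by
  have hf : (X ^ p - X : F[X]) ≠ 0 := by
    intro h
    have h2 : (X ^ p - X : F[X]).coeff p = 0 := by rw [h]; simp
    rw [Polynomial.coeff_sub, Polynomial.coeff_X_pow, Polynomial.coeff_X] at h2
    have h1 : ¬(1 = p) := fun h => (Nat.Prime.ne_one hp) h.symm
    rw [if_neg h1] at h2
    norm_num at h2
  have hdeg : (X ^ p - X : F[X]).natDegree ≤ p := by
    refine le_trans (Polynomial.natDegree_sub_le _ _) ?_
    simp [Polynomial.natDegree_X_pow, Polynomial.natDegree_X]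
    exact hp.one_lt.le.trans' (by omega)
  refine le_trans (card_filter_root_le' hf _ ?_) hdeg
  intro x _ hx
  simp [hx]

lemma psi_mem_Pfin (hp : Fact p.Prime) (k : ZMod p) :
    (ZMod.castHom (dvd_refl p) F) k ∈ Pfin F p := by
  rw [Pfin, Finset.mem_filter]
  refine ⟨Finset.mem_univ _, ?_⟩
  rw [← map_pow, ZMod.pow_card]

lemma Pfin_eq_image (hp : Fact p.Prime) :
    Pfin F p = univ.image (ZMod.castHom (dvd_refl p) F) := by
  symm
  apply Finset.eq_of_subset_of_card_le
  · intro x hx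
    rw [Finset.mem_image] at hx
    obtain ⟨k, _, rfl⟩ := hx
    exact psi_mem_Pfin hp k
  · calc (Pfin F p).card ≤ p := card_Pfin_le hp.out
      _ = (univ : Finset (ZMod p)).card := by rw [Finset.card_univ, ZMod.card]
      _ = _ := (Finset.card_image_of_injective _ (ZMod.castHom_injective F)).symm

lemma mem_Pfin_exists (hp : Fact p.Prime) {x : F} (hx : x ∈ Pfin F p) :
    ∃ k : ZMod p, (ZMod.castHom (dvd_refl p) F) k = x := by
  rw [Pfin_eq_image hp, Finset.mem_image] at hx
  obtain ⟨k, _, hk⟩ := hx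
  exact ⟨k, hk⟩

lemma W0_subset_Pfin (hp : Fact p.Prime) (hq : ∀ x : F, x ^ (p ^ 2) = x) :
    W0 F m n p ⊆ Pfin F p := by
  have hWfin : Wfin F m n p ⊆ Pfin F p := by
    intro x hx
    rcases Finset.mem_union.1 hx with h | h
    · rw [Hm', Finset.mem_filter] at h
      rw [Pfin, Finset.mem_filter]
      exact ⟨Finset.mem_univ _, h.2⟩
    · rw [Tim, Finset.mem_image] at h
      obtain ⟨z, hz, rfl⟩ := h
      rw [Pfin, Finset.mem_filter]
      refine ⟨Finset.mem_univ _, ?_⟩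
      rw [add_pow_char, ← pow_mul]
      have : p * p = p ^ 2 := by ring
      rw [this, hq z, add_comm]
  intro x hx
  rcases Finset.mem_union.1 hx with h | h
  · rcases Finset.mem_union.1 h with h1 | h1
    · exact hWfin h1
    · rw [Finset.mem_image] at h1
      obtain ⟨v, hv, rfl⟩ := h1
      have hvP := hWfin hv
      rw [Pfin, Finset.mem_filter] at hvP ⊢
      refine ⟨Finset.mem_univ _, ?_⟩
      have : (-v) ^ p = (0 - v) ^ p := by ring_nf
      rw [this, sub_pow_char, zero_pow hp.out.ne_zero, hvP.2, zero_sub]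
  · rw [Finset.mem_singleton.1 h]
    rw [Pfin, Finset.mem_filter]
    exact ⟨Finset.mem_univ _, by rw [zero_pow hp.out.ne_zero]⟩

lemma exists_h0 (hp : Fact p.Prime) (hF : Fintype.card F = p ^ 2) (hm : 1 ≤ m)
    (hstrong : IsStrongDigraph (monomialArc (F := F) m n)) :
    ∃ h₀ : F, h₀ ∈ SHset F m n ∧ h₀ ^ p ≠ h₀ := by
  by_contra hcon
  push_neg at hcon
  have hinv : ∀ (k : ℕ) (x y : F × F), walkLen (monomialArc (F := F) m n) k x y →
      x.2 ^ p = x.2 → y.2 ^ p = y.2 := by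
    intro k
    induction k with
    | zero => intro x y hxy hx; cases hxy; exact hx
    | succ k ih =>
      intro x y hxy hx
      obtain ⟨z, harc, hrest⟩ := hxy
      refine ih z y hrest ?_
      have hz : z.2 = x.1 ^ m * z.1 ^ n - x.2 := by
        rw [← harc]; ring
      have hSH : (x.1 ^ m * z.1 ^ n) ^ p = x.1 ^ m * z.1 ^ n :=
        hcon _ ⟨x.1, z.1, rfl⟩
      rw [hz, sub_pow_char, hSH, hx]
  have hlt : (Pfin F p).card < Fintype.card F := by
    rw [hF]
    calc (Pfin F p).card ≤ p := card_Pfin_le hp.out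
      _ < p ^ 2 := by nlinarith [hp.out.two_le]
  obtain ⟨α, hα⟩ : ∃ α : F, α ∉ Pfin F p := by
    by_contra hall
    push_neg at hall
    have hsub : (univ : Finset F) ⊆ Pfin F p := fun x _ => hall x
    have := Finset.card_le_card hsub
    rw [Finset.card_univ] at this
    omega
  obtain ⟨k, hwalk⟩ := hstrong ((0 : F), (0 : F)) ((0 : F), α)
  have : α ^ p = α := hinv k _ _ hwalk (by simp [zero_pow hp.out.ne_zero])
  exact hα (by simpa [Pfin] using this)

lemma decompose (hp : Fact p.Prime) (hF : Fintype.card F = p ^ 2)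
    {h₀ : F} (hh0 : h₀ ^ p ≠ h₀) (γ : F) :
    ∃ a b : ZMod p,
      γ = (ZMod.castHom (dvd_refl p) F) a + (ZMod.castHom (dvd_refl p) F) b * h₀ := by
  set ψ := (ZMod.castHom (dvd_refl p) F)
  have hinj : Function.Injective (fun ab : ZMod p × ZMod p => ψ ab.1 + ψ ab.2 * h₀) := by
    rintro ⟨a, b⟩ ⟨a', b'⟩ hab
    simp only at hab
    by_cases hbb : b = b'
    · subst hbb
      have h1 : ψ a = ψ a' := add_right_cancel hab
      have := ZMod.castHom_injective F h1
      simp [this]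
    · exfalso
      have hψb : ψ (b - b') ≠ 0 := by
        intro h
        apply hbb
        have h0 : ψ (b - b') = ψ 0 := by rw [h, map_zero]
        have := ZMod.castHom_injective F h0
        exact sub_eq_zero.1 this
      have key : h₀ * ψ (b - b') = ψ (a' - a) := by
        rw [map_sub, map_sub]
        linear_combination hab
      have hsolve : h₀ = ψ ((a' - a) / (b - b')) := by
        rw [map_div₀, eq_div_iff hψb]
        exact key
      apply hh0
      rw [hsolve, ← map_pow, ZMod.pow_card]
  have hbij : Function.Bijective (fun ab : ZMod p × ZMod p => ψ ab.1 + ψ ab.2 * h₀) := by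
    rw [Fintype.bijective_iff_injective_and_card]
    refine ⟨hinj, ?_⟩
    rw [Fintype.card_prod, ZMod.card, hF]; ring
  obtain ⟨⟨a, b⟩, hab⟩ := hbij.2 γ
  exact ⟨a, b, hab.symm⟩

end Subfield

/-! ### Cauchy–Davenport covering in ZMod p -/

section CD

variable {p : ℕ}

noncomputable def Rset (W : Finset (ZMod p)) : ℕ → Finset (ZMod p)
  | 0 => {0}
  | j + 1 => Rset W j + W

lemma zero_mem_Rset {W : Finset (ZMod p)} (hW : (0 : ZMod p) ∈ W) (j : ℕ) :
    (0 : ZMod p) ∈ Rset W j := by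
  induction j with
  | zero => simp [Rset]
  | succ j ih =>
    show (0 : ZMod p) ∈ Rset W j + W
    rw [Finset.mem_add]
    exact ⟨0, ih, 0, hW, by simp⟩

lemma card_Rset (hp : p.Prime) {W : Finset (ZMod p)} (hW : (0 : ZMod p) ∈ W) (j : ℕ) :
    min p (j * (W.card - 1) + 1) ≤ (Rset W j).card := by
  induction j with
  | zero =>
    have h1 : (Rset W 0).card = 1 := by simp [Rset]
    rw [h1, Nat.zero_mul]
    omega
  | succ j ih =>
    have hne : (Rset W j).Nonempty := ⟨0, zero_mem_Rset hW j⟩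
    have hWne : W.Nonempty := ⟨0, hW⟩
    have hcd := ZMod.cauchy_davenport hp hne hWne
    show min p ((j+1) * (W.card - 1) + 1) ≤ (Rset W j + W).card
    have hw1 : 1 ≤ W.card := Finset.card_pos.2 hWne
    have hmul : (j+1) * (W.card - 1) = j * (W.card - 1) + (W.card - 1) := by ring
    omega

lemma Rset_exists_list {W : Finset (ZMod p)} (j : ℕ) {v : ZMod p} (hv : v ∈ Rset W j) :
    ∃ l : List (ZMod p), (∀ x ∈ l, x ∈ W) ∧ l.length = j ∧ l.sum = v := by
  induction j generalizing v with
  | zero =>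
    simp [Rset] at hv
    exact ⟨[], by simp, by simp, by simp [hv]⟩
  | succ j ih =>
    rw [show Rset W (j+1) = Rset W j + W from rfl, Finset.mem_add] at hv
    obtain ⟨y, hy, z, hz, hyz⟩ := hv
    obtain ⟨l, hl, hlen, hsum⟩ := ih hy
    exact ⟨z :: l, by
      intro x hx
      rcases List.mem_cons.1 hx with h | h
      · rwa [h]
      · exact hl x h, by simp [hlen], by rw [List.sum_cons, hsum, add_comm]; exact hyz⟩

lemma covering (hp : p.Prime) {W : Finset (ZMod p)} (hW : (0 : ZMod p) ∈ W) {j : ℕ}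
    (hj : p ≤ j * (W.card - 1) + 1) (a : ZMod p) :
    ∃ l : List (ZMod p), (∀ x ∈ l, x ∈ W) ∧ l.length = j ∧ l.sum = a := by
  haveI : NeZero p := ⟨hp.pos.ne'⟩
  have h1 : p ≤ (Rset W j).card := by
    have := card_Rset hp hW j
    omega
  have h2 : Rset W j = univ := by
    apply Finset.eq_univ_of_card
    have h3 : (Rset W j).card ≤ (univ : Finset (ZMod p)).card := Finset.card_le_univ _
    rw [Finset.card_univ, ZMod.card] at *
    omega
  exact Rset_exists_list j (by rw [h2]; exact Finset.mem_univ a)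

end CD

/-! ### Numeric core -/

lemma numeric_core {p n c w j0 : ℕ} (hp : 2 ≤ p) (hc1 : 1 ≤ c) (hw : 2 ≤ w)
    (hcw : c ≤ 2 * w ^ 2) (hpc : p ^ 2 ≤ n * c + 1) (hcp : c + 1 ≤ p ^ 2)
    (hj : (j0 - 1) * (w - 1) ≤ p - 1) (hj1 : 1 ≤ j0) :
    (6 * (4 * j0) + 2 : ℝ) ≤ 96 * Real.sqrt (n + 1) + 1 := by
  have hP : (2:ℝ) ≤ (p:ℝ) := by exact_mod_cast hp
  have hC : (1:ℝ) ≤ (c:ℝ) := by exact_mod_cast hc1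
  have hW : (2:ℝ) ≤ (w:ℝ) := by exact_mod_cast hw
  have hCW : (c:ℝ) ≤ 2 * (w:ℝ)^2 := by exact_mod_cast hcw
  have hPC : ((p:ℝ))^2 ≤ (n:ℝ) * (c:ℝ) + 1 := by exact_mod_cast hpc
  have hCP : (c:ℝ) + 1 ≤ ((p:ℝ))^2 := by exact_mod_cast hcp
  have hJ : ((j0:ℝ) - 1) * ((w:ℝ) - 1) ≤ (p:ℝ) - 1 := by
    have h1 : ((j0 - 1 : ℕ) : ℝ) * ((w - 1 : ℕ) : ℝ) ≤ ((p - 1 : ℕ) : ℝ) := by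
      exact_mod_cast hj
    rw [Nat.cast_sub hj1, Nat.cast_sub (by omega : 1 ≤ w), Nat.cast_sub (by omega : 1 ≤ p)] at h1
    exact_mod_cast h1
  have hJ1' : (1:ℝ) ≤ (j0:ℝ) := by exact_mod_cast hj1
  set P := (p:ℝ); set C := (c:ℝ); set W := (w:ℝ); set J := (j0:ℝ)
  have hJ1 : (1:ℝ) ≤ J := hJ1'
  set sC := Real.sqrt C with hsC
  set sP := Real.sqrt (P^2 - 1) with hsP
  set sN := Real.sqrt ((n:ℝ) + 1) with hsN
  have hsCpos : 0 < sC := Real.sqrt_pos.2 (by linarith)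
  have h8 : Real.sqrt 8 ≤ 17/6 := by
    have h := Real.sqrt_le_sqrt (show (8:ℝ) ≤ (17/6)^2 by norm_num)
    rwa [Real.sqrt_sq (by norm_num : (0:ℝ) ≤ 17/6)] at h
  have hsqrt8 : 0 ≤ Real.sqrt 8 := Real.sqrt_nonneg _
  have hA : sC ≤ (W - 1) * Real.sqrt 8 := by
    have h1 : C ≤ ((W-1) * Real.sqrt 8)^2 := by
      have : ((W-1) * Real.sqrt 8)^2 = (W-1)^2 * 8 := by
        rw [mul_pow, Real.sq_sqrt (by norm_num : (8:ℝ) ≥ 0)]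
      rw [this]
      nlinarith
    calc sC ≤ Real.sqrt (((W-1) * Real.sqrt 8)^2) := Real.sqrt_le_sqrt h1
      _ = (W-1) * Real.sqrt 8 := Real.sqrt_sq (by nlinarith)
  have hPm : P - 1 ≤ sP := by
    calc P - 1 = Real.sqrt ((P-1)^2) := (Real.sqrt_sq (by linarith)).symm
      _ ≤ sP := Real.sqrt_le_sqrt (by nlinarith)
  have hCsP : sC ≤ sP := Real.sqrt_le_sqrt (by linarith)
  have hsPpos : 0 ≤ sP := Real.sqrt_nonneg _
  have hNs : sP ≤ sC * sN := by
    have h1 : P^2 - 1 ≤ C * ((n:ℝ)+1) := by nlinarith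
    calc sP ≤ Real.sqrt (C * ((n:ℝ)+1)) := Real.sqrt_le_sqrt h1
      _ = sC * sN := Real.sqrt_mul (by linarith) _
  have hmain : (24 * J + 1) * sC ≤ 96 * sN * sC := by
    have e1 : (24 * J + 1) * sC = 24 * ((J - 1) * sC) + 25 * sC := by ring
    have e2 : (J - 1) * sC ≤ (J - 1) * ((W - 1) * Real.sqrt 8) :=
      mul_le_mul_of_nonneg_left hA (by linarith)
    have e3 : (J - 1) * ((W - 1) * Real.sqrt 8) = ((J-1) * (W-1)) * Real.sqrt 8 := by ring
    have e4 : ((J-1) * (W-1)) * Real.sqrt 8 ≤ (P - 1) * (17/6) := by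
      have hjw : 0 ≤ (J-1)*(W-1) := by nlinarith
      have := mul_le_mul hJ h8 hsqrt8 (by linarith)
      linarith
    have e5 : (P - 1) * (17/6) ≤ 68 * sP := by nlinarith
    have e6 : 25 * sC ≤ 25 * sP := by linarith
    have e7 : 93 * sP ≤ 93 * (sC * sN) := by nlinarith
    calc (24 * J + 1) * sC = 24 * ((J - 1) * sC) + 25 * sC := e1
      _ ≤ 24 * (((J-1) * (W-1)) * Real.sqrt 8) + 25 * sC := by
          rw [← e3] at *; linarith
      _ ≤ 24 * ((P - 1) * (17/6)) + 25 * sP := by linarith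
      _ ≤ 68 * sP + 25 * sP + (24 * (P-1) * (17/6) - 68 * (P-1)) := by nlinarith
      _ = 93 * sP := by ring
      _ ≤ 93 * (sC * sN) := e7
      _ ≤ 96 * sN * sC := by nlinarith [Real.sqrt_nonneg ((n:ℝ)+1)]
  have hfin : 24 * J + 1 ≤ 96 * sN := le_of_mul_le_mul_right (by linarith) hsCpos
  push_cast
  linarith

/-! ### The master Waring lemma -/

section Master

variable {F : Type*} [Field F] [Fintype F] {p m n : ℕ}

lemma expand_W0 [CharP F p] (hp : Fact p.Prime) (hm : 1 ≤ m)
    {v u : F} (hv : v ∈ W0 F m n p) (hu : u ∈ SHset F m n) :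
    ∃ d₁ d₂ : F, Dpred F m n d₁ ∧ Dpred F m n d₂ ∧ d₁ + d₂ = v * u := by
  have hWfin : ∀ v ∈ Wfin F m n p,
      ∃ d₁ d₂ : F, Dpred F m n d₁ ∧ Dpred F m n d₂ ∧ d₁ + d₂ = v * u := by
    intro v hv
    rcases Finset.mem_union.1 hv with h | h
    · rw [Hm', Finset.mem_filter, mem_Hfin] at h
      exact ⟨v * u, 0, ⟨v * u, 0, SH_mul h.1.1 hu, SH_zero hm, by ring⟩,
        Dpred_zero hm, by ring⟩
    · rw [Tim, Finset.mem_image] at h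
      obtain ⟨z, hz, rfl⟩ := h
      rw [Kfin, Finset.mem_filter, mem_Hfin] at hz
      exact ⟨z * u, z ^ p * u,
        ⟨z * u, 0, SH_mul hz.1.1 hu, SH_zero hm, by ring⟩,
        ⟨z ^ p * u, 0, SH_mul (SH_pow hz.1.1 p) hu, SH_zero hm, by ring⟩,
        by ring⟩
  rcases Finset.mem_union.1 hv with h | h
  · rcases Finset.mem_union.1 h with h1 | h1
    · exact hWfin v h1
    · rw [Finset.mem_image] at h1
      obtain ⟨v', hv', rfl⟩ := h1
      obtain ⟨d₁, d₂, hd1, hd2, hsum⟩ := hWfin v' hv'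
      exact ⟨-d₁, -d₂, Dpred_neg hd1, Dpred_neg hd2, by rw [← neg_add, hsum]; ring⟩
  · rw [Finset.mem_singleton.1 h]
    exact ⟨0, 0, Dpred_zero hm, Dpred_zero hm, by ring⟩

lemma build_list [CharP F p] (hp : Fact p.Prime) (hm : 1 ≤ m)
    {u : F} (hu : u ∈ SHset F m n) (l : List (ZMod p))
    (hl : ∀ k ∈ l, (ZMod.castHom (dvd_refl p) F) k ∈ W0 F m n p) :
    ∃ L : List F, (∀ d ∈ L, Dpred F m n d) ∧ L.length = 2 * l.length ∧
      L.sum = (ZMod.castHom (dvd_refl p) F) l.sum * u := by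
  induction l with
  | nil => exact ⟨[], by simp, by simp, by simp⟩
  | cons k l ih =>
    obtain ⟨L, hL, hlen, hsum⟩ := ih (fun k hk => hl k (by simp [hk]))
    obtain ⟨d₁, d₂, hd1, hd2, hdsum⟩ := expand_W0 hp hm (hl k (by simp)) hu
    refine ⟨d₁ :: d₂ :: L, ?_, by simp [hlen]; omega, ?_⟩
    · intro d hd
      rcases List.mem_cons.1 hd with h | h
      · rwa [h]
      rcases List.mem_cons.1 h with h | h
      · rwa [h]
      · exact hL d h
    · simp only [List.sum_cons, List.sum_cons, hsum]
      rw [← add_assoc, hdsum, map_add, add_mul]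

lemma waring [CharP F p] (hp : Fact p.Prime) (hF : Fintype.card F = p ^ 2)
    (hm : 1 ≤ m) (hmn : m ≤ n)
    (hstrong : IsStrongDigraph (monomialArc (F := F) m n)) (γ : F) :
    ∃ L : List F, (∀ d ∈ L, Dpred F m n d) ∧
      (6 * L.length + 2 : ℝ) ≤ 96 * Real.sqrt ((n : ℝ) + 1) + 1 ∧ L.sum = γ := by
  have hn1 : 1 ≤ n := le_trans hm hmn
  have hq : ∀ x : F, x ^ (p ^ 2) = x := by
    intro x
    have := FiniteField.pow_card x
    rwa [hF] at this
  set ψ := (ZMod.castHom (dvd_refl p) F) with hψ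
  -- the element outside the prime subfield
  obtain ⟨h₀, hh0SH, hh0⟩ := exists_h0 hp hF hm hstrong
  -- decompose γ
  obtain ⟨a, b, hab⟩ := decompose hp hF hh0 γ
  -- the covering set in ZMod p
  set Wz : Finset (ZMod p) := univ.filter (fun k => ψ k ∈ W0 F m n p) with hWz
  have hWzmem : ∀ k ∈ Wz, ψ k ∈ W0 F m n p := by
    intro k hk
    rw [hWz, Finset.mem_filter] at hk
    exact hk.2
  have hW0img : W0 F m n p = Wz.image ψ := by
    ext x
    constructor
    · intro hx
      have hxP : x ∈ Pfin F p := W0_subset_Pfin hp hq hx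
      obtain ⟨k, hk⟩ := mem_Pfin_exists hp hxP
      rw [Finset.mem_image]
      exact ⟨k, by rw [hWz, Finset.mem_filter]; exact ⟨Finset.mem_univ _, by rw [hk]; exact hx⟩,
        hk⟩
    · intro hx
      rw [Finset.mem_image] at hx
      obtain ⟨k, hk, rfl⟩ := hx
      exact hWzmem k hk
  have hWzcard : Wz.card = (W0 F m n p).card := by
    rw [hW0img, Finset.card_image_of_injective _ (ZMod.castHom_injective F)]
  have hWz0 : (0 : ZMod p) ∈ Wz := by
    rw [hWz, Finset.mem_filter]
    exact ⟨Finset.mem_univ _, by rw [map_zero]; exact zero_mem_W0⟩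
  set w := (W0 F m n p).card with hw
  have hw2 : 2 ≤ w := two_le_card_W0
  set j0 := (p - 1) / (w - 1) + 1 with hj0
  -- covering hypothesis
  have hcov : p ≤ j0 * (Wz.card - 1) + 1 := by
    rw [hWzcard]
    have hdm : (w-1) * ((p-1)/(w-1)) + (p-1) % (w-1) = p - 1 := Nat.div_add_mod _ _
    have hmlt : (p - 1) % (w - 1) < w - 1 := Nat.mod_lt _ (by omega)
    have hmul : j0 * (w - 1) = (w-1) * ((p-1)/(w-1)) + (w - 1) := by
      rw [hj0]; ring
    omega
  obtain ⟨la, hla, hlalen, hlasum⟩ := covering hp.out hWz0 hcov a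
  obtain ⟨lb, hlb, hlblen, hlbsum⟩ := covering hp.out hWz0 hcov b
  -- build the D-lists
  obtain ⟨La, hLa, hLalen, hLasum⟩ := build_list hp hm SH_one la
    (fun k hk => hWzmem k (hla k hk))
  obtain ⟨Lb, hLb, hLblen, hLbsum⟩ := build_list hp hm hh0SH lb
    (fun k hk => hWzmem k (hlb k hk))
  refine ⟨La ++ Lb, ?_, ?_, ?_⟩
  · intro d hd
    rcases List.mem_append.1 hd with h | h
    · exact hLa d h
    · exact hLb d h
  · -- numeric bound
    have hlen : (La ++ Lb).length = 4 * j0 := by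
      rw [List.length_append, hLalen, hLblen, hlalen, hlblen]
      ring
    rw [hlen]
    -- gather the numeric hypotheses
    have hc1 : 1 ≤ (Hfin F m n).card := Finset.card_pos.2 ⟨1, one_mem_Hfin⟩
    have hcw : (Hfin F m n).card ≤ 2 * w ^ 2 := by
      have h1 := card_Hfin_le (F := F) (m := m) (n := n) (p := p) hq
      have h2 := card_Kfin_le (F := F) (m := m) (n := n) (p := p)
      have h3 : (Tim F m n p).card ≤ w := by
        apply Finset.card_le_card
        intro x hx
        rw [W0, Wfin]
        exact Finset.mem_union.2 (Or.inl (Finset.mem_union.2 (Or.inl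
          (Finset.mem_union.2 (Or.inr hx)))))
      have h4 : (Hm' F m n p).card ≤ w := by
        apply Finset.card_le_card
        intro x hx
        rw [W0, Wfin]
        exact Finset.mem_union.2 (Or.inl (Finset.mem_union.2 (Or.inl
          (Finset.mem_union.2 (Or.inl hx)))))
      calc (Hfin F m n).card ≤ (Kfin F m n p).card * (Hm' F m n p).card := h1
        _ ≤ (2 * (Tim F m n p).card) * (Hm' F m n p).card := Nat.mul_le_mul_right _ h2
        _ ≤ (2 * w) * w := Nat.mul_le_mul (Nat.mul_le_mul_left _ h3) h4
        _ = 2 * w ^ 2 := by ring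
    have hpc := card_Hfin_ge (F := F) (m := m) (n := n) hF hm hn1
    have hcp := card_Hfin_lt (F := F) (m := m) (n := n) (p := p) hF
    have hjle : (j0 - 1) * (w - 1) ≤ p - 1 := by
      rw [hj0]
      simp only [Nat.add_sub_cancel]
      exact Nat.div_mul_le_self _ _
    have hj1 : 1 ≤ j0 := by rw [hj0]; exact Nat.le_add_left 1 _
    have := numeric_core hp.out.two_le hc1 hw2 hcw hpc hcp hjle hj1
    push_cast at this ⊢
    linarith
  · rw [List.sum_append, hLasum, hLbsum, hlasum, hlbsum, mul_one, hab]

end Master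

theorem diam_le_of_strong_e_two {p m n : ℕ} (hp : p.Prime)
    (F : Type*) [Field F] [Fintype F] (hF : Fintype.card F = p ^ 2)
    (hm : 1 ≤ m) (hmn : m ≤ n) (hn : n ≤ p ^ 2 - 1)
    (hstrong : IsStrongDigraph (monomialArc (F := F) m n)) :
    ddiam (monomialArc (F := F) m n) ≤
      (⌊96 * Real.sqrt (n + 1) + 1⌋₊ : ℕ∞) := by
  haveI : Fact p.Prime := ⟨hp⟩
  haveI : CharP F p := charP_of_card hp hF
  apply ddiam_le_of_walks
  intro x y
  obtain ⟨L, hL, hlen, hsum⟩ := waring ‹Fact p.Prime› hF hm hmn hstrong (x.2 - y.2)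
  refine ⟨6 * L.length + 2, ?_, walk_main hm (le_trans hm hmn) hL hsum⟩
  apply Nat.le_floor
  push_cast
  push_cast at hlen
  linarith
end

section
/- Let q be a prime power and 1 ≤ m ≤ n ≤ q−1. If gcd(m, q−1) = 1 or gcd(n, q−1) = 1, then the monomial digraph D(q; m, n) is strong and diam(D(q; m, n)) ≤ 4. -/
lemma pow_surj_of_coprime {F : Type*} [Field F] [Fintype F] {k : ℕ} (hk : k ≠ 0)
    (h : Nat.gcd k (Fintype.card F - 1) = 1) :
    Function.Surjective (fun a : F => a ^ k) := by
  intro c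
  rcases eq_or_ne c 0 with rfl | hc
  · exact ⟨0, zero_pow hk⟩
  · have hcard : Nat.card Fˣ = Fintype.card F - 1 := by
      rw [Nat.card_units, Nat.card_eq_fintype_card]
    have h' : (Nat.card Fˣ).Coprime k := by
      rw [hcard, Nat.coprime_comm]; exact h
    obtain ⟨v, hv⟩ := (powCoprime h').surjective (Units.mk0 c hc)
    exact ⟨v, by simpa using congrArg Units.val hv⟩

theorem strong_and_diam_le_four_of_gcd_one {p e m n : ℕ} (hp : p.Prime) (he : 0 < e)
    (F : Type*) [Field F] [Fintype F] (hF : Fintype.card F = p ^ e)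
    (hm : 1 ≤ m) (hmn : m ≤ n) (hn : n ≤ p ^ e - 1)
    (hgcd : Nat.gcd m (p ^ e - 1) = 1 ∨ Nat.gcd n (p ^ e - 1) = 1) :
    IsStrongDigraph (monomialArc (F := F) m n) ∧
      ddiam (monomialArc (F := F) m n) ≤ 4 := by
  have hm0 : m ≠ 0 := by omega
  have hn0 : n ≠ 0 := by omega
  have key : ∀ x y : F × F, walkLen (monomialArc (F := F) m n) 4 x y := by
    intro x y
    rcases hgcd with hg | hg
    · -- gcd m case: x → (0, -x₂) → (s, x₂) → (1, y₁^n - y₂) → y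
      obtain ⟨s, hs⟩ := pow_surj_of_coprime (F := F) hm0 (by rw [hF]; exact hg)
        (x.2 + (y.1 ^ n - y.2))
      refine ⟨(0, -x.2), ?_, (s, x.2), ?_, (1, y.1 ^ n - y.2), ?_, y, ?_, rfl⟩
      · simp [monomialArc, zero_pow hn0]
      · simp [monomialArc, zero_pow hm0]
      · simp only [monomialArc]; rw [one_pow, mul_one]; exact hs.symm
      · simp [monomialArc]
    · -- gcd n case: x → (1, x₁^m - x₂) → (s, y₂) → (0, -y₂) → y
      obtain ⟨s, hs⟩ := pow_surj_of_coprime (F := F) hn0 (by rw [hF]; exact hg)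
        (x.1 ^ m - x.2 + y.2)
      refine ⟨(1, x.1 ^ m - x.2), ?_, (s, y.2), ?_, (0, -y.2), ?_, y, ?_, rfl⟩
      · simp [monomialArc]
      · simp only [monomialArc]; rw [one_pow, one_mul]; exact hs.symm
      · simp [monomialArc, zero_pow hn0]
      · simp [monomialArc, zero_pow hm0]
  constructor
  · exact fun x y => ⟨4, key x y⟩
  · refine iSup₂_le fun x y => ?_
    have := iInf₂_le (f := fun (k : ℕ)
      (_ : k ∈ {k : ℕ | walkLen (monomialArc (F := F) m n) k x y}) => (k : ℕ∞)) 4 (key x y)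
    simpa [ddist] using this
end

section
/- Let q be a prime power and 1 ≤ m ≤ n ≤ q−1. If gcd(m, q−1) = 1 and gcd(n, q−1) = 1, then the monomial digraph D(q; m, n) is strong and diam(D(q; m, n)) = 3. -/
lemma exists_pow_eq_root {F : Type*} [Field F] [Fintype F] {k : ℕ} (hk : 1 ≤ k)
    (h : Nat.gcd k (Fintype.card F - 1) = 1) (y : F) : ∃ x : F, x ^ k = y := by
  rcases eq_or_ne y 0 with rfl | hy
  · exact ⟨0, zero_pow (by omega)⟩
  · classical
    have hc : (Nat.card Fˣ).Coprime k := by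
      rw [Nat.card_eq_fintype_card, Fintype.card_units]
      exact Nat.Coprime.symm h
    obtain ⟨u, hu⟩ := (powCoprime hc).surjective (Units.mk0 y hy)
    refine ⟨u, ?_⟩
    have : ((u ^ k : Fˣ) : F) = ((Units.mk0 y hy : Fˣ) : F) := by
      rw [← powCoprime_apply hc, hu]
    simpa using this

theorem strong_and_diam_eq_three_of_gcd_one {p e m n : ℕ} (hp : p.Prime) (he : 0 < e)
    (F : Type*) [Field F] [Fintype F] (hF : Fintype.card F = p ^ e)
    (hm : 1 ≤ m) (hmn : m ≤ n) (hn : n ≤ p ^ e - 1)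
    (hgcdm : Nat.gcd m (p ^ e - 1) = 1) (hgcdn : Nat.gcd n (p ^ e - 1) = 1) :
    IsStrongDigraph (monomialArc (F := F) m n) ∧
      ddiam (monomialArc (F := F) m n) = 3 := by
  have hm0 : m ≠ 0 := by omega
  have hn0 : n ≠ 0 := by omega
  have hcard : Fintype.card F - 1 = p ^ e - 1 := by rw [hF]
  have rootm : ∀ y : F, ∃ x : F, x ^ m = y :=
    exists_pow_eq_root hm (by rw [hcard]; exact hgcdm)
  have rootn : ∀ y : F, ∃ x : F, x ^ n = y :=
    exists_pow_eq_root (le_trans hm hmn) (by rw [hcard]; exact hgcdn)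
  set r := monomialArc (F := F) m n with hr
  have key : ∀ x y : F × F, walkLen r 3 x y := by
    rintro ⟨a, b⟩ ⟨u, v⟩
    rcases eq_or_ne u 0 with rfl | hu
    · obtain ⟨ee, hee⟩ := rootn (a ^ m - b - v)
      refine ⟨(1, a ^ m - b), ?_, (ee, -v), ?_, (0, v), ?_, rfl⟩
      · show b + (a ^ m - b) = a ^ m * 1 ^ n; ring
      · show (a ^ m - b) + (-v) = 1 ^ m * ee ^ n; rw [hee]; ring
      · show (-v) + v = ee ^ m * 0 ^ n; rw [zero_pow hn0]; ring
    · obtain ⟨ee, hee⟩ := rootm ((b + v) / u ^ n)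
      refine ⟨(0, -b), ?_, (ee, b), ?_, (u, v), ?_, rfl⟩
      · show b + (-b) = a ^ m * 0 ^ n; rw [zero_pow hn0]; ring
      · show (-b) + b = 0 ^ m * ee ^ n; rw [zero_pow hm0]; ring
      · show b + v = ee ^ m * u ^ n
        rw [hee]
        field_simp
  have hstrong : IsStrongDigraph r := fun x y => ⟨3, key x y⟩
  refine ⟨hstrong, ?_⟩
  have hle : ddiam r ≤ 3 := by
    refine iSup₂_le fun x y => ?_
    have h3 : (3 : ℕ) ∈ {k : ℕ | walkLen r k x y} := key x y
    exact iInf₂_le 3 h3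
  have hF1 : (1 : F) ≠ 0 := one_ne_zero
  have hge : (3 : ℕ∞) ≤ ddist r (0, 0) ((0 : F), (1 : F)) := by
    refine le_iInf₂ fun k hk => ?_
    simp only [Set.mem_setOf_eq] at hk
    match k with
    | 0 => exact absurd (congrArg Prod.snd hk) (by simp)
    | 1 =>
      obtain ⟨z, hz, rfl⟩ := hk
      have h : (0 : F) + 1 = 0 ^ m * 0 ^ n := hz
      rw [zero_pow hm0, zero_add, zero_mul] at h
      exact absurd h hF1
    | 2 =>
      obtain ⟨z, hz1, w, hz2, rfl⟩ := hk
      have h1 : (0 : F) + z.2 = 0 ^ m * z.1 ^ n := hz1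
      rw [zero_pow hm0, zero_add, zero_mul] at h1
      have h2 : z.2 + (1 : F) = z.1 ^ m * 0 ^ n := hz2
      rw [zero_pow hn0, mul_zero, h1, zero_add] at h2
      exact absurd h2 hF1
    | (k + 3) => exact_mod_cast Nat.le_add_left 3 k
  have hge' : (3 : ℕ∞) ≤ ddiam r :=
    hge.trans (le_iSup₂ (f := fun x y => ddist r x y) ((0 : F), (0 : F)) ((0 : F), (1 : F)))
  exact le_antisymm hle hge'
end

section
/- Let q = p^e be a prime power and n a positive integer with 1 ≤ n ≤ q−1. If p does not divide n and q > (n² − n + 1)², then diam(D(q; 1, n)) = 3. -/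
open Finset
open scoped Classical

noncomputable section
variable {F : Type*} [Field F] [Fintype F]

instance : Fintype (MulChar F ℂ) := Fintype.ofFinite _

lemma hasEnoughC (m : ℕ) (hm : m ≠ 0) : HasEnoughRootsOfUnity ℂ m := by
  have : NeZero ((m : ℂ)) := ⟨Nat.cast_ne_zero.mpr hm⟩
  exact IsSepClosed.hasEnoughRootsOfUnity ℂ m

lemma normChar_le_one (χ : MulChar F ℂ) (x : F) : ‖χ x‖ ≤ 1 := by
  rcases eq_or_ne x 0 with h | h
  · rw [h, MulChar.map_zero]; simp
  · have hu : IsUnit x := isUnit_iff_ne_zero.mpr h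
    rw [← hu.unit_spec, ← MulChar.coe_equivToUnitHom]
    exact le_of_eq
      (Complex.norm_eq_one_of_mem_rootsOfUnity (MulChar.apply_mem_rootsOfUnity hu.unit))

def torsChars (F : Type*) [Field F] [Fintype F] (n : ℕ) : Finset (MulChar F ℂ) :=
  univ.filter fun χ => χ ^ n = 1

lemma mem_torsChars {n : ℕ} {χ : MulChar F ℂ} : χ ∈ torsChars F n ↔ χ ^ n = 1 := by
  simp [torsChars]

lemma card_torsChars_eq_units (n : ℕ) :
    (torsChars F n).card = (univ.filter fun u : Fˣ => u ^ n = 1).card := by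
  haveI := hasEnoughC (Monoid.exponent Fˣ) Monoid.exponent_ne_zero_of_finite
  obtain ⟨e⟩ := MulChar.mulEquiv_units F ℂ
  refine Finset.card_bij' (fun χ _ => e χ) (fun u _ => e.symm u) ?_ ?_ ?_ ?_
  · intro χ hχ
    simp only [mem_filter, mem_univ, true_and] at *
    rw [← map_pow, mem_torsChars.mp hχ, map_one]
  · intro u hu
    rw [mem_filter] at hu
    rw [mem_torsChars, ← map_pow, hu.2, map_one]
  · intro χ _; exact e.symm_apply_apply χ
  · intro u _; exact e.apply_symm_apply u

lemma card_units_filter_eq (n : ℕ) (hn : n ≠ 0) :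
    (univ.filter fun u : Fˣ => u ^ n = 1).card = (univ.filter fun v : F => v ^ n = 1).card := by
  refine Finset.card_bij (fun u _ => (u : F)) ?_ ?_ ?_
  · intro u hu
    rw [mem_filter] at hu
    simp only [mem_filter, mem_univ, true_and]
    rw [← Units.val_pow_eq_pow_val, hu.2, Units.val_one]
  · intro u _ u' _ h; exact Units.ext h
  · intro v hv
    simp only [mem_filter, mem_univ, true_and] at hv
    have hv0 : v ≠ 0 := by
      intro h; rw [h, zero_pow hn] at hv; exact zero_ne_one hv
    refine ⟨(isUnit_iff_ne_zero.mpr hv0).unit, ?_, rfl⟩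
    simp only [mem_filter, mem_univ, true_and]
    ext
    rw [Units.val_pow_eq_pow_val, IsUnit.unit_spec, hv, Units.val_one]

lemma card_roots_le (n : ℕ) (hn : n ≠ 0) :
    (univ.filter fun v : F => v ^ n = 1).card ≤ n := by
  have hsub : (univ.filter fun v : F => v ^ n = 1) ⊆ (Polynomial.nthRoots n (1 : F)).toFinset := by
    intro v hv
    simp only [mem_filter, mem_univ, true_and] at hv
    rw [Multiset.mem_toFinset, Polynomial.mem_nthRoots (Nat.pos_of_ne_zero hn)]
    exact hv
  calc (univ.filter fun v : F => v ^ n = 1).card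
      ≤ (Polynomial.nthRoots n (1 : F)).toFinset.card := Finset.card_le_card hsub
    _ ≤ Multiset.card (Polynomial.nthRoots n (1 : F)) := Multiset.toFinset_card_le _
    _ ≤ n := Polynomial.card_nthRoots n 1

lemma exists_char_ne_one {n : ℕ} (hn : n ≠ 0) {t : F} (ht : t ≠ 0) (h : ∀ w : F, w ^ n ≠ t) :
    ∃ χ : MulChar F ℂ, χ ^ n = 1 ∧ χ t ≠ 1 := by
  set H := (powMonoidHom n : Fˣ →* Fˣ).range with hH
  set tu : Fˣ := Units.mk0 t ht with htu
  have hne : (QuotientGroup.mk' H) tu ≠ 1 := by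
    intro hcon
    obtain ⟨w, hw⟩ := (QuotientGroup.eq_one_iff tu).mp hcon
    apply h (w : F)
    have h2 := congrArg Units.val hw
    simpa [powMonoidHom, htu] using h2
  haveI := hasEnoughC (Monoid.exponent (Fˣ ⧸ H)) (Monoid.exponent_ne_zero_of_finite (G := Fˣ ⧸ H))
  obtain ⟨φ, hφ⟩ :=
    CommGroup.exists_apply_ne_one_of_hasEnoughRootsOfUnity (Fˣ ⧸ H) ℂ hne
  refine ⟨MulChar.ofUnitHom (φ.comp (QuotientGroup.mk' H)), ?_, ?_⟩
  · refine MulChar.ext fun u => ?_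
    rw [MulChar.pow_apply_coe, MulChar.one_apply_coe, MulChar.ofUnitHom_coe]
    have h1 : (QuotientGroup.mk' H) (u ^ n) = 1 :=
      (QuotientGroup.eq_one_iff _).mpr ⟨u, rfl⟩
    have : (φ.comp (QuotientGroup.mk' H)) u ^ n = 1 := by
      rw [← map_pow, MonoidHom.comp_apply, h1, map_one]
    calc ((φ.comp (QuotientGroup.mk' H)) u : ℂ) ^ n
        = (((φ.comp (QuotientGroup.mk' H)) u ^ n : ℂˣ) : ℂ) := by
          rw [Units.val_pow_eq_pow_val]
      _ = 1 := by rw [this, Units.val_one]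
  · have heq : t = ((tu : Fˣ) : F) := rfl
    rw [heq, MulChar.ofUnitHom_coe]
    intro hcon
    exact hφ (Units.ext (by simpa using hcon))

lemma one_apply_ne_zero {x : F} (hx : x ≠ 0) : (1 : MulChar F ℂ) x = 1 := by
  have hu := isUnit_iff_ne_zero.mpr hx
  rw [← hu.unit_spec, MulChar.one_apply_coe]

lemma card_torsChars (n : ℕ) (hn : n ≠ 0) :
    (torsChars F n).card = (univ.filter fun v : F => v ^ n = 1).card := by
  rw [card_torsChars_eq_units, card_units_filter_eq n hn]

lemma sum_torsChars {n : ℕ} (hn : n ≠ 0) {t : F} (ht : t ≠ 0) :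
    ∑ χ ∈ torsChars F n, χ t = ((univ.filter fun v : F => v ^ n = t).card : ℂ) := by
  by_cases hw : ∃ w : F, w ^ n = t
  · obtain ⟨w, rfl⟩ := hw
    have hw0 : w ≠ 0 := by rintro rfl; exact ht (zero_pow hn)
    have h1 : ∀ χ ∈ torsChars F n, χ (w ^ n) = 1 := by
      intro χ hχ
      rw [map_pow, ← MulChar.pow_apply' χ hn, mem_torsChars.mp hχ]
      exact one_apply_ne_zero hw0
    rw [sum_congr rfl h1, sum_const, nsmul_eq_mul, mul_one, card_torsChars n hn]
    congr 1
    refine Finset.card_bij (fun v _ => v * w) ?_ ?_ ?_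
    · intro x hx
      rw [mem_filter] at hx ⊢
      refine ⟨mem_univ _, ?_⟩
      rw [mul_pow, hx.2, one_mul]
    · intro x _ y _ hxy
      exact mul_right_cancel₀ hw0 hxy
    · intro v hv
      rw [mem_filter] at hv
      refine ⟨v * w⁻¹, ?_, ?_⟩
      · rw [mem_filter]
        refine ⟨mem_univ _, ?_⟩
        rw [mul_pow, hv.2, inv_pow, mul_inv_cancel₀ (pow_ne_zero n hw0)]
      · show v * w⁻¹ * w = v
        rw [mul_assoc, inv_mul_cancel₀ hw0, mul_one]
  · push_neg at hw
    have hempty : (univ.filter fun v : F => v ^ n = t) = ∅ :=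
      Finset.filter_eq_empty_iff.mpr fun {v} _ => hw v
    rw [hempty]
    simp only [card_empty, Nat.cast_zero]
    obtain ⟨χ₀, hχ₀n, hχ₀t⟩ := exists_char_ne_one hn ht hw
    have key : χ₀ t * ∑ χ ∈ torsChars F n, χ t = ∑ χ ∈ torsChars F n, χ t := by
      rw [mul_sum]
      refine Finset.sum_bij' (fun χ _ => χ₀ * χ) (fun χ _ => χ₀⁻¹ * χ) ?_ ?_ ?_ ?_ ?_
      · intro χ hχ
        rw [mem_torsChars] at hχ ⊢
        rw [mul_pow, hχ, hχ₀n, one_mul]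
      · intro χ hχ
        rw [mem_torsChars] at hχ ⊢
        rw [mul_pow, hχ, inv_pow, hχ₀n, inv_one, one_mul]
      · intro χ _
        show χ₀⁻¹ * (χ₀ * χ) = χ
        rw [← mul_assoc, inv_mul_cancel χ₀, one_mul]
      · intro χ _
        show χ₀ * (χ₀⁻¹ * χ) = χ
        rw [← mul_assoc, mul_inv_cancel χ₀, one_mul]
      · intro χ _
        show χ₀ t * χ t = (χ₀ * χ) t
        rw [MulChar.mul_apply]
    have hsub : (χ₀ t - 1) * ∑ χ ∈ torsChars F n, χ t = 0 := by
      rw [sub_mul, one_mul, key, sub_self]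
    rcases mul_eq_zero.mp hsub with h | h
    · exact absurd (sub_eq_zero.mp h) hχ₀t
    · exact h

lemma exists_pow_eq {n : ℕ} (hn : n ≠ 0) {χ : MulChar F ℂ} (hχ : χ ^ n = 1)
    (h : ∀ ζ : F, ζ ^ n = 1 → χ ζ = 1) : ∃ ψ : MulChar F ℂ, ψ ^ n = χ := by
  classical
  set K : Subgroup Fˣ := (powMonoidHom n : Fˣ →* Fˣ).ker with hK
  let E : MulChar F ℂ ≃* (Fˣ →* ℂˣ) := MulChar.mulEquivToUnitHom
  have hEcoe : ∀ (ρ : MulChar F ℂ) (u : Fˣ), ((E ρ) u : ℂ) = ρ (u : F) := fun ρ u =>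
    MulChar.coe_equivToUnitHom ρ u
  let Θ : ((Fˣ ⧸ K) →* ℂˣ) → MulChar F ℂ := fun lam =>
    E.symm (lam.comp (QuotientGroup.mk' K))
  have hker : ∀ ρ : MulChar F ℂ, (∀ ζ : Fˣ, ζ ∈ K → E ρ ζ = 1) → ρ ∈ Set.range Θ := by
    intro ρ hρ
    refine ⟨QuotientGroup.lift K (E ρ) hρ, ?_⟩
    have hcomp : (QuotientGroup.lift K (E ρ) hρ).comp (QuotientGroup.mk' K) = E ρ :=
      MonoidHom.ext fun u => rfl
    show E.symm ((QuotientGroup.lift K (E ρ) hρ).comp (QuotientGroup.mk' K)) = ρ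
    rw [hcomp, MulEquiv.symm_apply_apply]
  have hζK : ∀ ζ : Fˣ, ζ ∈ K → (ζ : F) ^ n = 1 := by
    intro ζ hζ
    have h1 : ζ ^ n = 1 := by
      have := MonoidHom.mem_ker.mp hζ
      simpa [powMonoidHom] using this
    calc (ζ : F) ^ n = ((ζ ^ n : Fˣ) : F) := by rw [Units.val_pow_eq_pow_val]
      _ = 1 := by rw [h1, Units.val_one]
  have hχmem : χ ∈ Set.range Θ := by
    apply hker
    intro ζ hζ
    apply Units.ext
    rw [hEcoe, Units.val_one]
    exact h _ (hζK ζ hζ)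
  have hBsub : Set.range (fun ψ : MulChar F ℂ => ψ ^ n) ⊆ Set.range Θ := by
    rintro _ ⟨ψ, rfl⟩
    apply hker
    intro ζ hζ
    have h1 : ζ ^ n = 1 := by
      have := MonoidHom.mem_ker.mp hζ
      simpa [powMonoidHom] using this
    rw [map_pow, MonoidHom.pow_apply, ← map_pow (E ψ), h1, map_one]
  haveI := hasEnoughC (Monoid.exponent (Fˣ ⧸ K)) (Monoid.exponent_ne_zero_of_finite (G := Fˣ ⧸ K))
  haveI := hasEnoughC (Monoid.exponent Fˣ) (Monoid.exponent_ne_zero_of_finite (G := Fˣ))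
  haveI : Finite ((Fˣ ⧸ K) →* ℂˣ) :=
    Finite.of_equiv _ (CommGroup.monoidHom_mulEquiv_of_hasEnoughRootsOfUnity
      (Fˣ ⧸ K) ℂ).some.toEquiv.symm
  have c1 : Nat.card (Set.range Θ) ≤ Nat.card ((Fˣ ⧸ K) →* ℂˣ) :=
    Nat.card_le_card_of_surjective (Set.rangeFactorization Θ) Set.rangeFactorization_surjective
  have c2 : Nat.card ((Fˣ ⧸ K) →* ℂˣ) = Nat.card (Fˣ ⧸ K) :=
    Nat.card_congr (CommGroup.monoidHom_mulEquiv_of_hasEnoughRootsOfUnity (Fˣ ⧸ K) ℂ).some.toEquiv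
  have lag1 : Nat.card Fˣ = Nat.card (Fˣ ⧸ K) * Nat.card K :=
    Subgroup.card_eq_card_quotient_mul_card_subgroup K
  set f : MulChar F ℂ →* MulChar F ℂ := powMonoidHom n with hf
  have iso1 : Nat.card (MulChar F ℂ) = Nat.card f.range * Nat.card f.ker := by
    rw [← Nat.card_congr (QuotientGroup.quotientKerEquivRange f).toEquiv]
    exact Subgroup.card_eq_card_quotient_mul_card_subgroup f.ker
  have cD : Nat.card (MulChar F ℂ) = Nat.card Fˣ :=
    Nat.card_congr (MulChar.mulEquiv_units F ℂ).some.toEquiv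
  have cker : Nat.card f.ker = Nat.card K := by
    have e1 : f.ker ≃ {χ' : MulChar F ℂ // χ' ^ n = 1} :=
      Equiv.subtypeEquivRight (by
        intro χ'
        simp [hf, MonoidHom.mem_ker, powMonoidHom])
    have e2 : K ≃ {u : Fˣ // u ^ n = 1} :=
      Equiv.subtypeEquivRight (by
        intro u
        simp [hK, MonoidHom.mem_ker, powMonoidHom])
    rw [Nat.card_congr e1, Nat.card_congr e2, Nat.card_eq_fintype_card,
      Nat.card_eq_fintype_card, Fintype.card_subtype, Fintype.card_subtype]
    have := card_torsChars_eq_units (F := F) n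
    rw [torsChars] at this
    convert this using 2 <;> apply Finset.filter_congr_decidable
  have hrange_eq : Nat.card (Set.range (fun ψ : MulChar F ℂ => ψ ^ n)) = Nat.card f.range := by
    apply Nat.card_congr
    apply Equiv.setCongr
    ext ρ
    simp [hf, MonoidHom.mem_range, powMonoidHom, eq_comm]
  have hKpos : 0 < Nat.card K := Nat.card_pos
  have hfr : Nat.card f.range = Nat.card (Fˣ ⧸ K) := by
    have h1 : Nat.card f.range * Nat.card f.ker = Nat.card (Fˣ ⧸ K) * Nat.card K := by
      rw [← iso1, cD, lag1]
    rw [cker] at h1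
    exact Nat.eq_of_mul_eq_mul_right hKpos h1
  have hcards : Nat.card (Set.range Θ) ≤ Nat.card (Set.range (fun ψ : MulChar F ℂ => ψ ^ n)) := by
    rw [hrange_eq, hfr]
    exact le_trans c1 (le_of_eq c2)
  have hfinal : Set.range Θ = Set.range (fun ψ : MulChar F ℂ => ψ ^ n) :=
    (Set.eq_of_subset_of_ncard_le hBsub
      (by rw [← Nat.card_coe_set_eq, ← Nat.card_coe_set_eq]; exact hcards)
      (Set.toFinite _)).symm
  rw [hfinal] at hχmem
  exact hχmem

lemma one_le_sqrt_card : (1 : ℝ) ≤ Real.sqrt (Fintype.card F) := by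
  rw [show (1:ℝ) = Real.sqrt 1 by rw [Real.sqrt_one]]
  apply Real.sqrt_le_sqrt
  exact_mod_cast Fintype.card_pos

lemma norm_jacobiSum_le (α : MulChar F ℂ) {χ : MulChar F ℂ} (hχ : χ ≠ 1) :
    ‖jacobiSum α χ‖ ≤ Real.sqrt (Fintype.card F) := by
  have hq1 : (1 : ℝ) ≤ Real.sqrt (Fintype.card F) := one_le_sqrt_card
  rcases eq_or_ne α 1 with rfl | hα
  · rw [jacobiSum_one_nontrivial hχ, norm_neg, norm_one]; exact hq1
  rcases eq_or_ne (α * χ) 1 with hαχ | hαχ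
  · have hχα : χ = α⁻¹ := (inv_eq_of_mul_eq_one_right hαχ).symm
    rw [hχα, jacobiSum_nontrivial_inv hα, norm_neg]
    exact le_trans (normChar_le_one α (-1)) hq1
  · have hcc : ringChar ℂ ≠ ringChar F := by
      have h0 : ringChar ℂ = 0 := ringChar.eq_zero
      have h1 : ringChar F ≠ 0 := CharP.char_ne_zero_of_finite F (ringChar F)
      rw [h0]; exact fun hcon => h1 hcon.symm
    have hJ := jacobiSum_mul_jacobiSum_inv hcc hα hχ hαχ
    have hconj : jacobiSum α⁻¹ χ⁻¹ = (starRingEnd ℂ) (jacobiSum α χ) := by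
      rw [jacobiSum, jacobiSum, map_sum]
      apply Finset.sum_congr rfl
      intro x _
      rw [map_mul, ← MulChar.star_apply', ← MulChar.star_apply']
      rfl
    rw [hconj, Complex.mul_conj] at hJ
    have hns : Complex.normSq (jacobiSum α χ) = (Fintype.card F : ℝ) := by
      exact_mod_cast hJ
    rw [Complex.norm_def, hns]

lemma norm_inner_le (α : MulChar F ℂ) {χ : MulChar F ℂ} (hχ : χ ≠ 1) {a c : F}
    (ha : a ≠ 0) (hc : c ≠ 0) :
    ‖∑ u : F, α u * χ (a - c * u)‖ ≤ Real.sqrt (Fintype.card F) := by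
  have hac : a / c ≠ 0 := div_ne_zero ha hc
  have key : ∑ u : F, α u * χ (a - c * u) = α (a / c) * χ a * jacobiSum α χ := by
    rw [jacobiSum, mul_sum, ← Equiv.sum_comp (Equiv.mulLeft₀ (a / c) hac)
      (fun u => α u * χ (a - c * u))]
    apply Finset.sum_congr rfl
    intro x _
    have h1 : (Equiv.mulLeft₀ (a / c) hac) x = a / c * x := rfl
    have h0 : c * (a / c * x) = a * x := by
      field_simp
    have h2 : a - c * (a / c * x) = a * (1 - x) := by rw [h0]; ring
    rw [h1, map_mul, h2, map_mul]
    ring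
  rw [key]
  calc ‖α (a / c) * χ a * jacobiSum α χ‖
      = ‖α (a / c)‖ * ‖χ a‖ * ‖jacobiSum α χ‖ := by rw [norm_mul, norm_mul]
    _ ≤ Real.sqrt (Fintype.card F) := by
        have hJ := norm_jacobiSum_le α hχ
        have n1 := normChar_le_one α (a / c)
        have n2 := normChar_le_one χ a
        have h12 : ‖α (a / c)‖ * ‖χ a‖ ≤ 1 := mul_le_one₀ n1 (norm_nonneg _) n2
        calc ‖α (a / c)‖ * ‖χ a‖ * ‖jacobiSum α χ‖
            ≤ 1 * ‖jacobiSum α χ‖ := mul_le_mul_of_nonneg_right h12 (norm_nonneg _)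
          _ = ‖jacobiSum α χ‖ := one_mul _
          _ ≤ Real.sqrt (Fintype.card F) := hJ

lemma norm_T_le {n : ℕ} (hn : n ≠ 0) {a c : F} (ha : a ≠ 0) (hc : c ≠ 0)
    {χ : MulChar F ℂ} (hχn : χ ^ n = 1) (hχ : χ ≠ 1) :
    ‖∑ y : F, χ (a * y - c * y ^ (n + 1))‖ ≤ n * Real.sqrt (Fintype.card F) := by
  have hqpos : (0:ℝ) ≤ Real.sqrt (Fintype.card F) := Real.sqrt_nonneg _
  by_cases hz : ∃ ζ : F, ζ ^ n = 1 ∧ χ ζ ≠ 1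
  · obtain ⟨ζ, hζn, hζχ⟩ := hz
    have hζ0 : ζ ≠ 0 := by
      rintro rfl; rw [zero_pow hn] at hζn; exact zero_ne_one hζn
    have hTT : χ ζ * (∑ y : F, χ (a * y - c * y ^ (n + 1)))
        = ∑ y : F, χ (a * y - c * y ^ (n + 1)) := by
      rw [mul_sum, ← Equiv.sum_comp (Equiv.mulLeft₀ ζ hζ0)
        (fun y => χ (a * y - c * y ^ (n + 1)))]
      apply Finset.sum_congr rfl
      intro y _
      have h1 : (Equiv.mulLeft₀ ζ hζ0) y = ζ * y := rfl
      have h2 : a * (ζ * y) - c * (ζ * y) ^ (n + 1) = ζ * (a * y - c * y ^ (n + 1)) := by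
        have h3 : ζ ^ (n + 1) = ζ := by rw [pow_succ, hζn, one_mul]
        rw [mul_pow, h3]; ring
      rw [h1, h2, map_mul]
    have hT0 : ∑ y : F, χ (a * y - c * y ^ (n + 1)) = 0 := by
      have h3 : (χ ζ - 1) * ∑ y : F, χ (a * y - c * y ^ (n + 1)) = 0 := by
        rw [sub_mul, one_mul, hTT, sub_self]
      rcases mul_eq_zero.mp h3 with h | h
      · exact absurd (sub_eq_zero.mp h) hζχ
      · exact h
    rw [hT0, norm_zero]
    positivity
  · push_neg at hz
    obtain ⟨ψ, hψ⟩ := exists_pow_eq hn hχn hz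
    have hval : ∀ y : F, χ y = ψ (y ^ n) := by
      intro y
      rw [← hψ, MulChar.pow_apply' ψ hn, ← map_pow]
    have hfact : ∀ y : F, χ (a * y - c * y ^ (n + 1)) = ψ (y ^ n) * χ (a - c * y ^ n) := by
      intro y
      have h1 : a * y - c * y ^ (n + 1) = y * (a - c * y ^ n) := by ring
      rw [h1, map_mul, hval y]
    have hfib : ∑ y : F, ψ (y ^ n) * χ (a - c * y ^ n)
        = ∑ u : F, ((univ.filter fun y : F => y ^ n = u).card : ℂ) * (ψ u * χ (a - c * u)) := by
      rw [← Finset.sum_fiberwise univ (fun y : F => y ^ n)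
        (fun y => ψ (y ^ n) * χ (a - c * y ^ n))]
      apply Finset.sum_congr rfl
      intro u _
      rw [Finset.sum_congr rfl (fun y hy => by rw [(Finset.mem_filter.mp hy).2]),
        sum_const, nsmul_eq_mul]
    have hsplit : ∑ u : F, ((univ.filter fun y : F => y ^ n = u).card : ℂ) * (ψ u * χ (a - c * u))
        = ∑ θ ∈ torsChars F n, ∑ u : F, θ u * ψ u * χ (a - c * u) := by
      have h1 : ∀ u : F, ((univ.filter fun y : F => y ^ n = u).card : ℂ) * (ψ u * χ (a - c * u))
          = ∑ θ ∈ torsChars F n, θ u * ψ u * χ (a - c * u) := by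
        intro u
        rcases eq_or_ne u 0 with rfl | hu
        · simp [MulChar.map_zero]
        · rw [← sum_torsChars hn hu, sum_mul]
          apply Finset.sum_congr rfl
          intro θ _
          ring
      rw [Finset.sum_congr rfl fun u _ => h1 u, Finset.sum_comm]
    rw [Finset.sum_congr rfl fun y _ => hfact y, hfib, hsplit]
    calc ‖∑ θ ∈ torsChars F n, ∑ u : F, θ u * ψ u * χ (a - c * u)‖
        ≤ ∑ θ ∈ torsChars F n, ‖∑ u : F, θ u * ψ u * χ (a - c * u)‖ := norm_sum_le _ _
      _ ≤ ∑ _θ ∈ torsChars F n, Real.sqrt (Fintype.card F) := by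
          apply Finset.sum_le_sum
          intro θ _
          rw [Finset.sum_congr rfl fun u _ => by rw [← MulChar.mul_apply θ ψ]]
          exact norm_inner_le (θ * ψ) hχ ha hc
      _ = (torsChars F n).card * Real.sqrt (Fintype.card F) := by
          rw [sum_const, nsmul_eq_mul]
      _ ≤ n * Real.sqrt (Fintype.card F) := by
          apply mul_le_mul_of_nonneg_right _ hqpos
          exact_mod_cast le_trans (le_of_eq (card_torsChars n hn)) (card_roots_le n hn)

lemma exists_point {n : ℕ} (hn : n ≠ 0) {a c : F} (ha : a ≠ 0) (hc : c ≠ 0)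
    (hq : ((n ^ 2 - n + 1) ^ 2 : ℕ) < Fintype.card F) :
    ∃ y v : F, y ≠ 0 ∧ v ^ n = a * y - c * y ^ (n + 1) := by
  by_contra hcon
  push_neg at hcon
  set f : F → F := fun y => a * y - c * y ^ (n + 1) with hf
  have key : ∀ y : F, ((univ.filter fun v : F => v ^ n = f y).card : ℂ)
      = (∑ χ ∈ torsChars F n, χ (f y)) + (if f y = 0 then 1 else 0) := by
    intro y
    by_cases h0 : f y = 0
    · rw [if_pos h0, h0]
      have hset : (univ.filter fun v : F => v ^ n = (0:F)) = {0} := by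
        ext v
        simp [pow_eq_zero_iff hn]
      have hzero : ∑ χ ∈ torsChars F n, χ (0:F) = 0 :=
        Finset.sum_eq_zero fun χ _ => MulChar.map_zero χ
      rw [hset, hzero, Finset.card_singleton]
      norm_num
    · rw [if_neg h0, sum_torsChars hn h0, add_zero]
  have hLHS : ∑ y : F, ((univ.filter fun v : F => v ^ n = f y).card : ℂ) = 1 := by
    rw [Finset.sum_eq_single (0:F)]
    · have hf0 : f 0 = 0 := by
        simp [hf, zero_pow hn]
      have hset : (univ.filter fun v : F => v ^ n = f 0) = {0} := by
        ext v
        simp [hf0, pow_eq_zero_iff hn]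
      rw [hset, Finset.card_singleton, Nat.cast_one]
    · intro y _ hy
      have hempty : (univ.filter fun v : F => v ^ n = f y) = ∅ :=
        Finset.filter_eq_empty_iff.mpr fun {v} _ => hcon y v hy
      rw [hempty]
      simp
    · intro h
      exact absurd (Finset.mem_univ 0) h
  have hone : (1 : MulChar F ℂ) ∈ torsChars F n := by
    rw [mem_torsChars, one_pow]
  have hRHS : ∑ y : F, ((univ.filter fun v : F => v ^ n = f y).card : ℂ)
      = (Fintype.card F : ℂ) + ∑ χ ∈ (torsChars F n).erase 1, ∑ y : F, χ (f y) := by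
    rw [Finset.sum_congr rfl fun y _ => key y, Finset.sum_add_distrib, Finset.sum_comm,
      ← Finset.add_sum_erase _ _ hone]
    have hTZ : (∑ y : F, (1 : MulChar F ℂ) (f y))
        + ∑ y : F, (if f y = 0 then (1:ℂ) else 0) = (Fintype.card F : ℂ) := by
      rw [← Finset.sum_add_distrib]
      have hpt : ∀ y : F, (1 : MulChar F ℂ) (f y) + (if f y = 0 then (1:ℂ) else 0) = 1 := by
        intro y
        by_cases h0 : f y = 0
        · rw [h0, MulChar.map_zero, if_pos rfl]
          norm_num
        · rw [one_apply_ne_zero h0, if_neg h0]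
          norm_num
      rw [Finset.sum_congr rfl fun y _ => hpt y, Finset.sum_const, nsmul_eq_mul, mul_one,
        Finset.card_univ]
    linear_combination hTZ
  have hmain : (Fintype.card F : ℂ) + ∑ χ ∈ (torsChars F n).erase 1, ∑ y : F, χ (f y) = 1 := by
    rw [← hRHS, hLHS]
  -- bound the error sum
  set q : ℕ := Fintype.card F with hqdef
  set s : ℝ := Real.sqrt q with hs
  have herr : ‖∑ χ ∈ (torsChars F n).erase 1, ∑ y : F, χ (f y)‖ ≤ ((n - 1 : ℕ) : ℝ) * (n * s) := by
    calc ‖∑ χ ∈ (torsChars F n).erase 1, ∑ y : F, χ (f y)‖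
        ≤ ∑ χ ∈ (torsChars F n).erase 1, ‖∑ y : F, χ (f y)‖ := norm_sum_le _ _
      _ ≤ ∑ _χ ∈ (torsChars F n).erase 1, (n * s) := by
          apply Finset.sum_le_sum
          intro χ hχ
          have hχ1 : χ ≠ 1 := (Finset.mem_erase.mp hχ).1
          have hχn : χ ^ n = 1 := mem_torsChars.mp (Finset.mem_erase.mp hχ).2
          exact norm_T_le hn ha hc hχn hχ1
      _ = ((torsChars F n).erase 1).card * (n * s) := by rw [sum_const, nsmul_eq_mul]
      _ ≤ ((n - 1 : ℕ) : ℝ) * (n * s) := by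
          apply mul_le_mul_of_nonneg_right
          · have h1 : ((torsChars F n).erase 1).card = (torsChars F n).card - 1 :=
              Finset.card_erase_of_mem hone
            have h2 : (torsChars F n).card ≤ n :=
              le_trans (le_of_eq (card_torsChars n hn)) (card_roots_le n hn)
            have h3 : ((torsChars F n).erase 1).card ≤ n - 1 := by omega
            exact_mod_cast h3
          · positivity
  have hqs : (q : ℝ) ≤ 1 + ((n - 1 : ℕ) : ℝ) * (n * s) := by
    have h1 : (q : ℂ) = 1 - ∑ χ ∈ (torsChars F n).erase 1, ∑ y : F, χ (f y) := by
      linear_combination hmain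
    calc (q : ℝ) = ‖(q : ℂ)‖ := by rw [Complex.norm_natCast]
      _ = ‖1 - ∑ χ ∈ (torsChars F n).erase 1, ∑ y : F, χ (f y)‖ := by rw [← h1]
      _ ≤ ‖(1:ℂ)‖ + ‖∑ χ ∈ (torsChars F n).erase 1, ∑ y : F, χ (f y)‖ := norm_sub_le _ _
      _ ≤ 1 + ((n - 1 : ℕ) : ℝ) * (n * s) := by
          rw [norm_one]
          exact add_le_add_right herr 1
  -- numeric contradiction
  have hn1 : (1 : ℝ) ≤ (n : ℝ) := by exact_mod_cast Nat.one_le_iff_ne_zero.mpr hn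
  have hnn : n ≤ n ^ 2 := by nlinarith [Nat.one_le_iff_ne_zero.mpr hn]
  have hM : (((n ^ 2 - n + 1 : ℕ)) : ℝ) = (n:ℝ) ^ 2 - n + 1 := by
    push_cast [Nat.cast_sub hnn]
    ring
  have hMs : (n:ℝ) ^ 2 - (n:ℝ) + 1 < s := by
    rw [← hM]
    have h2 : (((n ^ 2 - n + 1 : ℕ)) : ℝ) ^ 2 < (q : ℝ) := by exact_mod_cast hq
    exact (Real.lt_sqrt (by positivity)).mpr h2
  have hcast : ((n - 1 : ℕ) : ℝ) = (n : ℝ) - 1 := by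
    have : 1 ≤ n := Nat.one_le_iff_ne_zero.mpr hn
    push_cast [Nat.cast_sub this]
    ring
  rw [hcast] at hqs
  have hs2 : s * s = (q : ℝ) := Real.mul_self_sqrt (by positivity)
  have hspos : 0 < s := by nlinarith
  nlinarith [mul_lt_mul_of_pos_right hMs hspos]

lemma exists_sol {n : ℕ} (hn : n ≠ 0) {a : F} (ha : a ≠ 0) (c : F)
    (hq : ((n ^ 2 - n + 1) ^ 2 : ℕ) < Fintype.card F) :
    ∃ z w : F, a * z ^ n - z * w ^ n = c := by
  rcases eq_or_ne c 0 with rfl | hc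
  · exact ⟨0, 0, by rw [zero_pow hn]; ring⟩
  obtain ⟨y, v, hy, hv⟩ := exists_point hn ha hc hq
  refine ⟨y⁻¹, v * y⁻¹, ?_⟩
  have hyn : y ^ (n + 1) ≠ 0 := pow_ne_zero _ hy
  have h1 : a * (y⁻¹) ^ n - y⁻¹ * (v * y⁻¹) ^ n = (a * y - v ^ n) / y ^ (n + 1) := by
    field_simp
    linear_combination (a * y ^ 2 - y * v ^ n) * ((by rw [← mul_pow, mul_inv_cancel₀ hy, one_pow]) : y ^ n * y⁻¹ ^ n = 1)
  rw [h1, hv]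
  have h2 : a * y - (a * y - c * y ^ (n + 1)) = c * y ^ (n + 1) := by ring
  rw [h2, mul_div_assoc, div_self hyn, mul_one]


lemma walk3_s5 {n : ℕ} (hn : n ≠ 0)
    (hq : ((n ^ 2 - n + 1) ^ 2 : ℕ) < Fintype.card F) (x u : F × F) :
    walkLen (monomialArc (F := F) 1 n) 3 x u := by
  obtain ⟨a1, a2⟩ := x
  obtain ⟨u1, u2⟩ := u
  have key : ∃ z1 w1 : F, w1 * u1 ^ n - z1 * w1 ^ n + a1 * z1 ^ n = u2 + a2 := by
    by_cases hu1 : u1 = 0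
    · by_cases ha1 : a1 = 0
      · refine ⟨-(u2 + a2), 1, ?_⟩
        rw [hu1, ha1, zero_pow hn, one_pow]
        ring
      · rcases eq_or_ne (u2 + a2) 0 with h0 | hc
        · refine ⟨0, 0, ?_⟩
          rw [hu1, zero_pow hn, h0]
          ring
        · obtain ⟨z, w, hzw⟩ := exists_sol hn ha1 (u2 + a2) hq
          refine ⟨z, w, ?_⟩
          rw [hu1, zero_pow hn]
          linear_combination hzw
    · refine ⟨0, (u2 + a2) / u1 ^ n, ?_⟩
      rw [zero_pow hn]
      field_simp
      ring
  obtain ⟨z1, w1, h⟩ := key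
  refine ⟨(z1, a1 * z1 ^ n - a2), ?_, (w1, z1 * w1 ^ n - (a1 * z1 ^ n - a2)), ?_,
    (u1, u2), ?_, rfl⟩
  · show a2 + (a1 * z1 ^ n - a2) = a1 ^ 1 * z1 ^ n
    rw [pow_one]; ring
  · show (a1 * z1 ^ n - a2) + (z1 * w1 ^ n - (a1 * z1 ^ n - a2)) = z1 ^ 1 * w1 ^ n
    rw [pow_one]; ring
  · show (z1 * w1 ^ n - (a1 * z1 ^ n - a2)) + u2 = w1 ^ 1 * u1 ^ n
    rw [pow_one]; linear_combination -h

lemma not_walk0 (n : ℕ) :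
    ¬ walkLen (monomialArc (F := F) 1 n) 0 ((0 : F), (0 : F)) ((0 : F), (1 : F)) := by
  intro h
  have h1 : ((0 : F), (0 : F)) = ((0 : F), (1 : F)) := h
  have := congrArg Prod.snd h1
  simp only at this
  exact zero_ne_one this

lemma not_walk1 {n : ℕ} :
    ¬ walkLen (monomialArc (F := F) 1 n) 1 ((0 : F), (0 : F)) ((0 : F), (1 : F)) := by
  rintro ⟨z, harc, hz⟩
  have hz' : z = ((0 : F), (1 : F)) := hz
  subst hz'
  have : (0 : F) + 1 = 0 ^ 1 * 0 ^ n := harc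
  rw [pow_one, zero_mul, zero_add] at this
  exact one_ne_zero this

lemma not_walk2 {n : ℕ} (hn : n ≠ 0) :
    ¬ walkLen (monomialArc (F := F) 1 n) 2 ((0 : F), (0 : F)) ((0 : F), (1 : F)) := by
  rintro ⟨z, h1, w, h2, hw⟩
  have hw' : w = ((0 : F), (1 : F)) := hw
  subst hw'
  have e1 : (0 : F) + z.2 = 0 ^ 1 * z.1 ^ n := h1
  have e2 : z.2 + 1 = z.1 ^ 1 * (0 : F) ^ n := h2
  rw [pow_one, zero_mul, zero_add] at e1
  rw [pow_one, zero_pow hn, mul_zero, e1, zero_add] at e2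
  exact one_ne_zero e2

end

theorem diam_eq_three_of_large_q {p e n : ℕ} (hp : p.Prime) (he : 0 < e)
    (F : Type*) [Field F] [Fintype F] (hF : Fintype.card F = p ^ e)
    (hn1 : 1 ≤ n) (hn : n ≤ p ^ e - 1)
    (hpn : ¬ p ∣ n) (hq : (n ^ 2 - n + 1) ^ 2 < p ^ e) :
    ddiam (monomialArc (F := F) 1 n) = 3 := by
  have hn0 : n ≠ 0 := by omega
  have hq' : ((n ^ 2 - n + 1) ^ 2 : ℕ) < Fintype.card F := by rw [hF]; exact hq
  have hwalk : ∀ x u : F × F, walkLen (monomialArc (F := F) 1 n) 3 x u := walk3_s5 hn0 hq'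
  have hub : ddiam (monomialArc (F := F) 1 n) ≤ 3 := by
    unfold ddiam
    apply iSup_le
    intro x
    apply iSup_le
    intro y
    unfold ddist
    have h3 : (3 : ℕ) ∈ {k : ℕ | walkLen (monomialArc (F := F) 1 n) k x y} := hwalk x y
    have := iInf₂_le (f := fun (k : ℕ) (_ : k ∈ {k : ℕ | walkLen (monomialArc (F := F) 1 n) k x y}) => (k : ℕ∞)) 3 h3
    calc (⨅ k ∈ {k : ℕ | walkLen (monomialArc (F := F) 1 n) k x y}, (k : ℕ∞))
        ≤ ((3 : ℕ) : ℕ∞) := this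
      _ = 3 := by norm_cast
  have hlb : (3 : ℕ∞) ≤ ddist (monomialArc (F := F) 1 n) ((0 : F), (0 : F)) ((0 : F), (1 : F)) := by
    unfold ddist
    apply le_iInf₂
    intro k hk
    have hk3 : 3 ≤ k := by
      by_contra hlt
      push_neg at hlt
      interval_cases k
      · exact not_walk0 n hk
      · exact not_walk1 hk
      · exact not_walk2 hn0 hk
    calc (3 : ℕ∞) = ((3 : ℕ) : ℕ∞) := by norm_cast
      _ ≤ (k : ℕ∞) := by exact_mod_cast hk3
  have hge : (3 : ℕ∞) ≤ ddiam (monomialArc (F := F) 1 n) := by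
    refine le_trans hlb ?_
    unfold ddiam
    exact le_iSup_of_le ((0 : F), (0 : F)) (le_iSup_of_le ((0 : F), (1 : F)) le_rfl)
  exact le_antisymm hub hge
end

section
/- Let q = p^e be a prime power, n a positive integer with 1 ≤ n ≤ q−1, and suppose p does not divide n and q > (n² − n + 1)². Then for all a, c ∈ F_q with a ≠ 0 and c ≠ 0, the equation a·x^n − x·y^n + c = 0 has a solution (x, y) ∈ F_q². -/
open Finset

attribute [local instance] Fintype.ofFinite
set_option linter.unusedSectionVars false

section Aux

variable {F : Type*} [Field F] [Fintype F] [DecidableEq F]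

private lemma my_exp_ne : NeZero (Monoid.exponent Fˣ) :=
  ⟨Monoid.exponent_ne_zero_of_finite⟩

/-- Orthogonality: sum of all character values at a fixed nonzero `v`. -/
private lemma my_sum_mulChar {v : F} (hv : v ≠ 0) :
    ∑ ψ : MulChar F ℂ, ψ v = if v = 1 then ((Fintype.card F - 1 : ℕ) : ℂ) else 0 := by
  haveI := my_exp_ne (F := F)
  split_ifs with h
  · subst h
    simp only [MulChar.map_one]
    rw [Finset.sum_const, Finset.card_univ, nsmul_eq_mul, mul_one]
    congr 1
    rw [← Nat.card_eq_fintype_card, MulChar.card_eq_card_units_of_hasEnoughRootsOfUnity F ℂ,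
      Nat.card_eq_fintype_card, Fintype.card_units]
  · obtain ⟨χ₀, hχ₀⟩ := MulChar.exists_apply_ne_one_of_hasEnoughRootsOfUnity F ℂ h
    have key : χ₀ v * ∑ ψ : MulChar F ℂ, ψ v = ∑ ψ : MulChar F ℂ, ψ v := by
      rw [Finset.mul_sum]
      exact Fintype.sum_bijective (χ₀ * ·) (Group.mulLeft_bijective χ₀) _ _
        (fun ψ => (MulChar.mul_apply χ₀ ψ v).symm)
    have : (χ₀ v - 1) * ∑ ψ : MulChar F ℂ, ψ v = 0 := by ring_nf; linear_combination key
    rcases mul_eq_zero.mp this with h' | h'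
    · exact absurd (by linear_combination h') hχ₀
    · exact h'


/-- Sum of a character over the nonzero elements. -/
private lemma my_sum_char_units (χ : MulChar F ℂ) :
    ∑ x ∈ univ \ {0}, χ x = if χ = 1 then ((Fintype.card F - 1 : ℕ) : ℂ) else 0 := by
  have h0 : ∑ x ∈ univ \ {0}, χ x = ∑ x : F, χ x := by
    apply Finset.sum_subset (Finset.subset_univ _)
    intro x _ hx
    simp only [mem_sdiff, mem_univ, mem_singleton, true_and, not_not] at hx
    subst hx
    exact MulChar.map_nonunit χ (by simp)
  split_ifs with h
  · subst h
    rw [h0, MulChar.sum_one_eq_card_units, Fintype.card_units]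
  · rw [h0, MulChar.sum_eq_zero_of_ne_one h]

private lemma my_norm_char {χ : MulChar F ℂ} {x : F} (hx : x ≠ 0) : ‖χ x‖ = 1 := by
  have h1 : χ x ^ (Fintype.card F - 1) = 1 := by
    rw [← map_pow, FiniteField.pow_card_sub_one_eq_one x hx, MulChar.map_one]
  have hq : Fintype.card F - 1 ≠ 0 := by
    have := Fintype.one_lt_card (α := F); omega
  exact Complex.norm_eq_one_of_pow_eq_one h1 hq

private lemma my_norm_jacobiSum {χ φ : MulChar F ℂ} (hχ : χ ≠ 1) :
    ‖jacobiSum φ χ‖ ≤ Real.sqrt (Fintype.card F) := by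
  have hq1 : (1 : ℝ) ≤ Fintype.card F := by exact_mod_cast Fintype.card_pos
  by_cases hφ : φ = 1
  · subst hφ
    rw [jacobiSum_one_nontrivial hχ, norm_neg, norm_one]
    rw [show (1:ℝ) = Real.sqrt 1 by simp]
    exact Real.sqrt_le_sqrt hq1
  by_cases hm : φ * χ = 1
  · have hce : χ = φ⁻¹ := by
      exact eq_inv_of_mul_eq_one_left (by rwa [mul_comm] at hm)
    subst hce
    rw [jacobiSum_nontrivial_inv hφ, norm_neg, my_norm_char (by norm_num : (-1 : F) ≠ 0)]
    rw [show (1:ℝ) = Real.sqrt 1 by simp]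
    exact Real.sqrt_le_sqrt hq1
  · -- generic case: |J|² = q
    have hchar : ringChar ℂ ≠ ringChar F := by
      rw [ringChar.eq_zero]
      have : CharP F (ringChar F) := ringChar.charP F
      have hprime : (ringChar F).Prime := CharP.char_is_prime F (ringChar F)
      exact fun h => hprime.ne_zero h.symm
    have hmul := jacobiSum_mul_jacobiSum_inv hchar hφ hχ hm
    have hconj : (starRingEnd ℂ) (jacobiSum φ χ) = jacobiSum φ⁻¹ χ⁻¹ := by
      rw [jacobiSum, jacobiSum, map_sum]
      refine Finset.sum_congr rfl fun x _ => ?_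
      rw [map_mul, starRingEnd_apply, starRingEnd_apply, MulChar.star_apply',
        MulChar.star_apply']
    have hnormsq : (Complex.normSq (jacobiSum φ χ) : ℂ) = (Fintype.card F : ℂ) := by
      rw [← Complex.mul_conj, hconj, hmul]
    have hns : Complex.normSq (jacobiSum φ χ) = (Fintype.card F : ℝ) := by
      exact_mod_cast hnormsq
    rw [Complex.norm_def, hns]

/-- Number of characters with `ψ ^ n = χ` is at most `n`. -/
private lemma my_card_solchar (n : ℕ) (hn : n ≠ 0) (χ : MulChar F ℂ) :
    ({ψ : MulChar F ℂ | ψ ^ n = χ} : Finset (MulChar F ℂ)).card ≤ n := by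
  classical
  rcases Finset.eq_empty_or_nonempty ({ψ : MulChar F ℂ | ψ ^ n = χ} : Finset (MulChar F ℂ)) with
    hE | ⟨φ₁, hφ₁⟩
  · rw [hE]; simpa using Nat.zero_le n
  · simp only [Finset.mem_filter, Finset.mem_univ, true_and] at hφ₁
    obtain ⟨eqv⟩ := MulChar.mulEquiv_units F ℂ
    have hmap : ∀ ψ ∈ ({ψ : MulChar F ℂ | ψ ^ n = χ} : Finset (MulChar F ℂ)),
        ((eqv (ψ * φ₁⁻¹) : Fˣ) : F) ∈ (Polynomial.nthRoots n (1 : F)).toFinset := by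
      intro ψ hψ
      simp only [Finset.mem_filter, Finset.mem_univ, true_and] at hψ
      rw [Multiset.mem_toFinset, Polynomial.mem_nthRoots (Nat.pos_of_ne_zero hn)]
      have : (ψ * φ₁⁻¹) ^ n = 1 := by
        rw [mul_pow, hψ, inv_pow, hφ₁, mul_inv_cancel]
      calc ((eqv (ψ * φ₁⁻¹) : Fˣ) : F) ^ n = ((eqv (ψ * φ₁⁻¹) ^ n : Fˣ) : F) := by push_cast; ring
        _ = ((eqv ((ψ * φ₁⁻¹) ^ n) : Fˣ) : F) := by rw [map_pow]
        _ = 1 := by rw [this, map_one, Units.val_one]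
    calc ({ψ : MulChar F ℂ | ψ ^ n = χ} : Finset (MulChar F ℂ)).card
        ≤ (Polynomial.nthRoots n (1 : F)).toFinset.card := by
          refine Finset.card_le_card_of_injOn _ hmap ?_
          intro x _ y _ hxy
          have := eqv.injective (Units.ext hxy)
          exact mul_right_cancel this
      _ ≤ Multiset.card (Polynomial.nthRoots n (1 : F)) := Multiset.toFinset_card_le _
      _ ≤ n := Polynomial.card_nthRoots n 1

/-- The count of `n`-th roots of a nonzero element, via characters. -/
private lemma my_count_nthRoots (n : ℕ) (hn : n ≠ 0) {b : F} (hb : b ≠ 0) :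
    (({y : F | y ^ n = b} : Finset F).card : ℂ)
      = ∑ ψ ∈ ({ψ : MulChar F ℂ | ψ ^ n = 1} : Finset (MulChar F ℂ)), ψ b⁻¹ := by
  classical
  have hQ : ((Fintype.card F - 1 : ℕ) : ℂ) ≠ 0 := by
    have := Fintype.one_lt_card (α := F)
    exact Nat.cast_ne_zero.mpr (by omega)
  apply mul_left_cancel₀ hQ
  have step : ∀ y : F, ∑ ψ : MulChar F ℂ, ψ (y ^ n * b⁻¹)
      = if y ^ n = b then ((Fintype.card F - 1 : ℕ) : ℂ) else 0 := by
    intro y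
    by_cases hy : y = 0
    · subst hy
      rw [zero_pow hn, zero_mul, if_neg (fun h => hb h.symm)]
      simp [MulChar.map_zero]
    · rw [my_sum_mulChar (mul_ne_zero (pow_ne_zero n hy) (inv_ne_zero hb))]
      congr 1
      simp [mul_inv_eq_one₀ hb]
  calc ((Fintype.card F - 1 : ℕ) : ℂ) * (({y : F | y ^ n = b} : Finset F).card : ℂ)
      = ∑ y : F, if y ^ n = b then ((Fintype.card F - 1 : ℕ) : ℂ) else 0 := by
        rw [← Finset.sum_filter, Finset.sum_const, nsmul_eq_mul, mul_comm]
    _ = ∑ y : F, ∑ ψ : MulChar F ℂ, ψ (y ^ n * b⁻¹) := by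
        exact Finset.sum_congr rfl fun y _ => (step y).symm
    _ = ∑ ψ : MulChar F ℂ, ψ b⁻¹ * ∑ y : F, (ψ ^ n) y := by
        rw [Finset.sum_comm]
        refine Finset.sum_congr rfl fun ψ _ => ?_
        rw [Finset.mul_sum]
        refine Finset.sum_congr rfl fun y _ => ?_
        rw [map_mul, MulChar.pow_apply' ψ hn, map_pow, mul_comm]
    _ = ∑ ψ : MulChar F ℂ, ψ b⁻¹ *
          (if ψ ^ n = 1 then ((Fintype.card F - 1 : ℕ) : ℂ) else 0) := by
        refine Finset.sum_congr rfl fun ψ _ => ?_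
        congr 1
        split_ifs with h
        · rw [h, MulChar.sum_one_eq_card_units, Fintype.card_units]
        · exact MulChar.sum_eq_zero_of_ne_one h
    _ = ((Fintype.card F - 1 : ℕ) : ℂ)
          * ∑ ψ ∈ ({ψ : MulChar F ℂ | ψ ^ n = 1} : Finset (MulChar F ℂ)), ψ b⁻¹ := by
        rw [Finset.mul_sum, Finset.sum_filter]
        refine Finset.sum_congr rfl fun ψ _ => ?_
        split_ifs with h <;> ring

/-- Decomposition of the character sum `S_χ` into Jacobi-type sums. -/
private lemma my_S_decomp (n : ℕ) (hn : n ≠ 0) (a c : F) (χ : MulChar F ℂ) :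
    ∑ x ∈ univ \ {0}, χ (a * x ^ n + c) * χ⁻¹ x
      = ∑ φ ∈ ({φ : MulChar F ℂ | φ ^ n = χ} : Finset (MulChar F ℂ)),
          ∑ u ∈ univ \ {0}, χ (a * u + c) * φ u⁻¹ := by
  classical
  have hQ : ((Fintype.card F - 1 : ℕ) : ℂ) ≠ 0 := by
    have := Fintype.one_lt_card (α := F)
    exact Nat.cast_ne_zero.mpr (by omega)
  apply mul_left_cancel₀ hQ
  calc ((Fintype.card F - 1 : ℕ) : ℂ) * ∑ x ∈ univ \ {0}, χ (a * x ^ n + c) * χ⁻¹ x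
      = ∑ x ∈ univ \ {0},
          (∑ u ∈ univ \ {0}, (∑ φ : MulChar F ℂ, φ (x ^ n * u⁻¹)) * χ (a * u + c))
            * χ⁻¹ x := by
        rw [Finset.mul_sum]
        refine Finset.sum_congr rfl fun x hx => ?_
        have hx0 : x ≠ 0 := by
          simp only [Finset.mem_sdiff, Finset.mem_univ, Finset.mem_singleton, true_and] at hx
          exact hx
        have hxn : x ^ n ∈ univ \ {0} := by
          simp only [Finset.mem_sdiff, Finset.mem_univ, Finset.mem_singleton, true_and]
          exact pow_ne_zero n hx0
        have key : ∑ u ∈ univ \ {0}, (∑ φ : MulChar F ℂ, φ (x ^ n * u⁻¹)) * χ (a * u + c)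
            = ((Fintype.card F - 1 : ℕ) : ℂ) * χ (a * x ^ n + c) := by
          have h1 : ∀ u ∈ univ \ {0},
              (∑ φ : MulChar F ℂ, φ (x ^ n * u⁻¹)) * χ (a * u + c)
                = if u = x ^ n then ((Fintype.card F - 1 : ℕ) : ℂ) * χ (a * u + c) else 0 := by
            intro u hu
            have hu0 : u ≠ 0 := by
              simp only [Finset.mem_sdiff, Finset.mem_univ, Finset.mem_singleton, true_and] at hu
              exact hu
            rw [my_sum_mulChar (mul_ne_zero (pow_ne_zero n hx0) (inv_ne_zero hu0))]
            have hcond : (x ^ n * u⁻¹ = 1) = (u = x ^ n) := by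
              rw [mul_inv_eq_one₀ hu0]
              exact propext ⟨Eq.symm, Eq.symm⟩
            simp only [hcond]
            split_ifs with h
            · rfl
            · rw [zero_mul]
          rw [Finset.sum_congr rfl h1, Finset.sum_ite_eq' (univ \ {0}) (x ^ n)
            (fun u => ((Fintype.card F - 1 : ℕ) : ℂ) * χ (a * u + c)), if_pos hxn]
        rw [key]
        ring
    _ = ∑ φ : MulChar F ℂ,
          (∑ u ∈ univ \ {0}, χ (a * u + c) * φ u⁻¹) * (∑ x ∈ univ \ {0}, ((φ ^ n) * χ⁻¹) x) := by
        have hx' : ∀ x ∈ univ \ {0},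
            (∑ u ∈ univ \ {0}, (∑ φ : MulChar F ℂ, φ (x ^ n * u⁻¹)) * χ (a * u + c)) * χ⁻¹ x
              = ∑ φ : MulChar F ℂ,
                  (∑ u ∈ univ \ {0}, χ (a * u + c) * φ u⁻¹) * (((φ ^ n) * χ⁻¹) x) := by
          intro x hx
          simp only [Finset.sum_mul]
          rw [Finset.sum_comm]
          refine Finset.sum_congr rfl fun φ _ => ?_
          refine Finset.sum_congr rfl fun u hu => ?_
          rw [map_mul, MulChar.mul_apply, MulChar.pow_apply' φ hn, ← map_pow]
          ring
        rw [Finset.sum_congr rfl hx', Finset.sum_comm]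
        refine Finset.sum_congr rfl fun φ _ => ?_
        rw [← Finset.mul_sum]
    _ = ∑ φ : MulChar F ℂ,
          (∑ u ∈ univ \ {0}, χ (a * u + c) * φ u⁻¹)
            * (if (φ ^ n) * χ⁻¹ = 1 then ((Fintype.card F - 1 : ℕ) : ℂ) else 0) := by
        refine Finset.sum_congr rfl fun φ _ => ?_
        rw [my_sum_char_units ((φ ^ n) * χ⁻¹)]
    _ = ((Fintype.card F - 1 : ℕ) : ℂ)
          * ∑ φ ∈ ({φ : MulChar F ℂ | φ ^ n = χ} : Finset (MulChar F ℂ)),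
              ∑ u ∈ univ \ {0}, χ (a * u + c) * φ u⁻¹ := by
        rw [Finset.mul_sum, Finset.sum_filter]
        refine Finset.sum_congr rfl fun φ _ => ?_
        have hcond : ((φ ^ n) * χ⁻¹ = 1) = (φ ^ n = χ) := by
          rw [mul_inv_eq_one]
        simp only [hcond]
        split_ifs with h <;> ring

/-- Bound on the inner (Jacobi-type) sums. -/
private lemma my_norm_B_le (n : ℕ) {a c : F} (ha : a ≠ 0) (hc : c ≠ 0)
    {χ : MulChar F ℂ} (hχ : χ ≠ 1) (φ : MulChar F ℂ) :
    ‖∑ u ∈ univ \ {0}, χ (a * u + c) * φ u⁻¹‖ ≤ Real.sqrt (Fintype.card F) := by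
  classical
  set t : F := -(c * a⁻¹) with ht
  have ht0 : t ≠ 0 := by
    simp only [ht, ne_eq, neg_eq_zero, mul_eq_zero, inv_eq_zero, not_or]
    exact ⟨hc, ha⟩
  have hsub : ∑ u ∈ univ \ {0}, χ (a * u + c) * φ u⁻¹
      = ∑ v ∈ univ \ {0}, χ (a * (t * v) + c) * φ (t * v)⁻¹ := by
    refine (Finset.sum_nbij' (fun v => t * v) (fun u => t⁻¹ * u) ?_ ?_ ?_ ?_ ?_).symm
    · intro v hv
      simp only [Finset.mem_sdiff, Finset.mem_univ, Finset.mem_singleton, true_and] at hv ⊢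
      exact mul_ne_zero ht0 hv
    · intro u hu
      simp only [Finset.mem_sdiff, Finset.mem_univ, Finset.mem_singleton, true_and] at hu ⊢
      exact mul_ne_zero (inv_ne_zero ht0) hu
    · intro v _
      field_simp
    · intro u _
      field_simp
    · intro v _
      rfl
  have hval : ∀ v : F, a * (t * v) + c = c * (1 - v) := by
    intro v
    field_simp [ht]
    rw [ht]; linear_combination (-(v * c)) * mul_inv_cancel₀ ha
  have hJ : ∑ v ∈ univ \ {0}, χ (c * (1 - v)) * φ (t * v)⁻¹
      = φ t⁻¹ * χ c * jacobiSum φ⁻¹ χ := by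
    have : ∀ v ∈ univ \ {0}, χ (c * (1 - v)) * φ (t * v)⁻¹
        = (φ t⁻¹ * χ c) * (φ⁻¹ v * χ (1 - v)) := by
      intro v _
      rw [map_mul, mul_inv, map_mul, MulChar.inv_apply']
      ring
    rw [Finset.sum_congr rfl this, ← Finset.mul_sum]
    congr 1
    rw [show jacobiSum φ⁻¹ χ = ∑ x : F, φ⁻¹ x * χ (1 - x) from rfl]
    apply Finset.sum_subset (Finset.subset_univ _)
    intro v _ hv
    simp only [Finset.mem_sdiff, Finset.mem_univ, Finset.mem_singleton, true_and, not_not] at hv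
    subst hv
    rw [MulChar.map_nonunit φ⁻¹ (by simp), zero_mul]
  rw [hsub]
  simp only [hval]
  rw [hJ]
  rw [norm_mul, norm_mul, my_norm_char (inv_ne_zero ht0), my_norm_char hc, one_mul, one_mul]
  exact my_norm_jacobiSum hχ

end Aux

private lemma my_arith {n q : ℕ} (hn1 : 1 ≤ n) (hq : (n ^ 2 - n + 1) ^ 2 < q) :
    ((n : ℝ) - 1) * ((n : ℝ) * Real.sqrt q) < ((q - 1 : ℕ) : ℝ) := by
  have hq1 : 1 ≤ q := le_trans (Nat.one_le_iff_ne_zero.mpr (pow_ne_zero _ (by omega))) hq.le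
  have hcast : ((q - 1 : ℕ) : ℝ) = (q : ℝ) - 1 := by
    rw [Nat.cast_sub hq1]; norm_num
  have hn1' : (1 : ℝ) ≤ (n : ℝ) := by exact_mod_cast hn1
  set s := Real.sqrt q with hsdef
  have hs0 : 0 ≤ s := Real.sqrt_nonneg _
  have hs2 : s ^ 2 = q := Real.sq_sqrt (by positivity)
  have hnn : n ≤ n ^ 2 := Nat.le_self_pow two_ne_zero n
  have hcast2 : ((n ^ 2 - n + 1 : ℕ) : ℝ) = (n : ℝ) ^ 2 - (n : ℝ) + 1 := by
    push_cast [Nat.cast_sub hnn]; ring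
  have h1 : (n : ℝ) ^ 2 - (n : ℝ) + 1 < s := by
    rw [hsdef, ← hcast2]
    refine (Real.lt_sqrt (by positivity)).mpr ?_
    exact_mod_cast hq
  have hposval : (1 : ℝ) ≤ (n : ℝ) ^ 2 - (n : ℝ) + 1 := by nlinarith
  have hspos : (0 : ℝ) < s := lt_of_lt_of_le one_pos (hposval.trans h1.le)
  rw [hcast]
  nlinarith [mul_lt_mul_of_pos_right h1 hspos, hposval]

theorem exists_solution_of_large_q {p e n : ℕ} (hp : p.Prime) (he : 0 < e)
    (F : Type*) [Field F] [Fintype F] (hF : Fintype.card F = p ^ e)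
    (hn1 : 1 ≤ n) (hn : n ≤ p ^ e - 1)
    (hpn : ¬ p ∣ n) (hq : (n ^ 2 - n + 1) ^ 2 < p ^ e) :
    ∀ a c : F, a ≠ 0 → c ≠ 0 → ∃ x y : F, a * x ^ n - x * y ^ n + c = 0 := by
  classical
  intro a c ha hc
  have hq' : (n ^ 2 - n + 1) ^ 2 < Fintype.card F := by rw [hF]; exact hq
  have hn0 : n ≠ 0 := by omega
  by_cases hex : ∃ x : F, x ≠ 0 ∧ a * x ^ n + c = 0
  · obtain ⟨x, hx0, hx⟩ := hex
    exact ⟨x, 0, by rw [zero_pow hn0]; linear_combination hx⟩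
  push_neg at hex
  -- the nonzero elements
  set F₀ : Finset F := univ \ {0} with hF₀
  have hmem : ∀ {x : F}, x ∈ F₀ ↔ x ≠ 0 := by
    intro x
    simp [hF₀]
  have hcardF₀ : F₀.card = Fintype.card F - 1 := by
    rw [hF₀, Finset.card_sdiff_of_subset (by simp), Finset.card_univ, Finset.card_singleton]
  -- the group of characters of order dividing n
  set K := ({ψ : MulChar F ℂ | ψ ^ n = 1} : Finset (MulChar F ℂ)) with hK
  have h1K : (1 : MulChar F ℂ) ∈ K := by
    simp [hK]
  -- the number of solutions
  set Nn : ℕ := ∑ x ∈ F₀, ({y : F | y ^ n = (a * x ^ n + c) * x⁻¹} : Finset F).card with hNn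
  -- the character sums
  set S : MulChar F ℂ → ℂ := fun ψ => ∑ x ∈ F₀, (ψ⁻¹) (a * x ^ n + c) * (ψ⁻¹)⁻¹ x with hS
  have hNeq : (Nn : ℂ) = ∑ ψ ∈ K, S ψ := by
    rw [hNn]
    push_cast
    have hstep : ∀ x ∈ F₀, (({y : F | y ^ n = (a * x ^ n + c) * x⁻¹} : Finset F).card : ℂ)
        = ∑ ψ ∈ K, (ψ⁻¹) (a * x ^ n + c) * (ψ⁻¹)⁻¹ x := by
      intro x hx
      have hx0 : x ≠ 0 := hmem.mp hx
      have hfx : (a * x ^ n + c) * x⁻¹ ≠ 0 :=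
        mul_ne_zero (hex x hx0) (inv_ne_zero hx0)
      rw [my_count_nthRoots n hn0 hfx]
      refine Finset.sum_congr rfl fun ψ _ => ?_
      rw [mul_inv_rev, inv_inv, map_mul, MulChar.inv_apply', inv_inv]
      ring
    rw [Finset.sum_congr rfl hstep, Finset.sum_comm]
  -- the trivial character contributes q - 1
  have hS1 : S 1 = ((Fintype.card F - 1 : ℕ) : ℂ) := by
    simp only [hS]
    have : ∀ x ∈ F₀, ((1 : MulChar F ℂ)⁻¹) (a * x ^ n + c) * ((1 : MulChar F ℂ)⁻¹)⁻¹ x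
        = 1 := by
      intro x hx
      have hx0 : x ≠ 0 := hmem.mp hx
      rw [inv_one, inv_one, MulChar.one_apply (isUnit_iff_ne_zero.mpr (hex x hx0)),
        MulChar.one_apply (isUnit_iff_ne_zero.mpr hx0), mul_one]
    rw [Finset.sum_congr rfl this, Finset.sum_const, nsmul_eq_mul, mul_one, hcardF₀]
  -- bound for the non-trivial characters
  have hSbound : ∀ ψ ∈ K.erase 1, ‖S ψ‖ ≤ (n : ℝ) * Real.sqrt (Fintype.card F) := by
    intro ψ hψ
    have hψ1 : ψ ≠ 1 := (Finset.mem_erase.mp hψ).1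
    have hψK : ψ ^ n = 1 := by
      have := (Finset.mem_erase.mp hψ).2
      rw [hK] at this
      simpa using this
    have hχ1 : ψ⁻¹ ≠ 1 := fun h => hψ1 (by rw [← inv_inv ψ, h, inv_one])
    simp only [hS]
    rw [my_S_decomp n hn0 a c ψ⁻¹]
    calc ‖∑ φ ∈ ({φ : MulChar F ℂ | φ ^ n = ψ⁻¹} : Finset (MulChar F ℂ)),
            ∑ u ∈ univ \ {0}, (ψ⁻¹) (a * u + c) * φ u⁻¹‖
        ≤ ∑ φ ∈ ({φ : MulChar F ℂ | φ ^ n = ψ⁻¹} : Finset (MulChar F ℂ)),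
            ‖∑ u ∈ univ \ {0}, (ψ⁻¹) (a * u + c) * φ u⁻¹‖ := norm_sum_le _ _
      _ ≤ ({φ : MulChar F ℂ | φ ^ n = ψ⁻¹} : Finset (MulChar F ℂ)).card
            • Real.sqrt (Fintype.card F) := by
          exact Finset.sum_le_card_nsmul _ _ _ fun φ _ => my_norm_B_le n ha hc hχ1 φ
      _ ≤ (n : ℝ) * Real.sqrt (Fintype.card F) := by
          rw [nsmul_eq_mul]
          have := my_card_solchar n hn0 (ψ⁻¹ : MulChar F ℂ)
          exact mul_le_mul_of_nonneg_right (by exact_mod_cast this) (Real.sqrt_nonneg _)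
  -- main estimate
  have hcard_erase : ((K.erase 1).card : ℝ) ≤ (n : ℝ) - 1 := by
    have h1 : (K.erase 1).card = K.card - 1 := Finset.card_erase_of_mem h1K
    have h2 : K.card ≤ n := by
      have := my_card_solchar n hn0 (1 : MulChar F ℂ)
      rwa [hK]
    have h3 : (K.erase 1).card ≤ n - 1 := by omega
    calc ((K.erase 1).card : ℝ) ≤ ((n - 1 : ℕ) : ℝ) := by exact_mod_cast h3
      _ = (n : ℝ) - 1 := by rw [Nat.cast_sub hn1]; norm_num
  have hNne : Nn ≠ 0 := by
    intro hN0
    have hsplit : (Nn : ℂ) = S 1 + ∑ ψ ∈ K.erase 1, S ψ := by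
      rw [hNeq, Finset.add_sum_erase K S h1K]
    rw [hN0, hS1] at hsplit
    have hE : ((Fintype.card F - 1 : ℕ) : ℝ) = ‖∑ ψ ∈ K.erase 1, S ψ‖ := by
      have : ∑ ψ ∈ K.erase 1, S ψ = -((Fintype.card F - 1 : ℕ) : ℂ) := by
        push_cast at hsplit ⊢
        linear_combination -hsplit
      rw [this, norm_neg, Complex.norm_natCast]
    have hlt := my_arith hn1 hq'
    have hle : ‖∑ ψ ∈ K.erase 1, S ψ‖
        ≤ ((n : ℝ) - 1) * ((n : ℝ) * Real.sqrt (Fintype.card F)) := by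
      calc ‖∑ ψ ∈ K.erase 1, S ψ‖ ≤ ∑ ψ ∈ K.erase 1, ‖S ψ‖ := norm_sum_le _ _
        _ ≤ (K.erase 1).card • ((n : ℝ) * Real.sqrt (Fintype.card F)) :=
            Finset.sum_le_card_nsmul _ _ _ hSbound
        _ ≤ ((n : ℝ) - 1) * ((n : ℝ) * Real.sqrt (Fintype.card F)) := by
            rw [nsmul_eq_mul]
            exact mul_le_mul_of_nonneg_right hcard_erase (by positivity)
    rw [← hE] at hle
    exact absurd (lt_of_le_of_lt hle hlt) (lt_irrefl _)
  -- extract a solution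
  obtain ⟨x, hxF₀, hxcard⟩ : ∃ x ∈ F₀,
      ({y : F | y ^ n = (a * x ^ n + c) * x⁻¹} : Finset F).card ≠ 0 := by
    by_contra hall
    push_neg at hall
    exact hNne (Finset.sum_eq_zero hall)
  have hx0 : x ≠ 0 := hmem.mp hxF₀
  obtain ⟨y, hy⟩ : ∃ y : F, y ^ n = (a * x ^ n + c) * x⁻¹ := by
    obtain ⟨y, hy⟩ := Finset.card_ne_zero.mp hxcard
    refine ⟨y, ?_⟩
    simpa using hy
  refine ⟨x, y, ?_⟩
  have hxy : x * y ^ n = a * x ^ n + c := by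
    rw [hy]
    field_simp
  linear_combination -hxy
end

section
/- Let q be a prime power and 1 ≤ m ≤ n ≤ q−1. If the monomial digraph D(q; m, n) is strong and q > (m−1)⁴, then diam(D(q; m, n)) ≤ 13. -/
section Auxiliary
set_option linter.unusedSectionVars false
set_option maxHeartbeats 1000000
open Finset

namespace MonDG

variable {F : Type*} [Field F] [Fintype F] [DecidableEq F]
  [Fintype (MulChar F ℂ)] [DecidableEq (MulChar F ℂ)]


lemma norm_addChar (ψ : AddChar F ℂ) (x : F) : ‖ψ x‖ = 1 := by
  have h : ψ x ^ Fintype.card F = 1 := by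
    rw [← AddChar.map_nsmul_eq_pow, card_nsmul_eq_zero, AddChar.map_zero_eq_one]
  exact Complex.norm_eq_one_of_pow_eq_one h Fintype.card_ne_zero

lemma conj_addChar (ψ : AddChar F ℂ) (x : F) : (starRingEnd ℂ) (ψ x) = ψ (-x) := by
  have h : (0 : ℕ) < ringChar F := Nat.pos_of_ne_zero (CharP.ringChar_ne_zero_of_finite F)
  rw [AddChar.starComp_apply h, AddChar.inv_apply]

lemma norm_mulChar (χ : MulChar F ℂ) (u : Fˣ) : ‖χ (u : F)‖ = 1 := by
  have hc : (Fintype.card Fˣ) ≠ 0 := Fintype.card_ne_zero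
  have h : χ (u : F) ^ Fintype.card Fˣ = 1 := by
    rw [← map_pow, ← Units.val_pow_eq_pow_val, pow_card_eq_one, Units.val_one, map_one]
  exact Complex.norm_eq_one_of_pow_eq_one h hc

lemma conj_mulChar (χ : MulChar F ℂ) (x : F) : (starRingEnd ℂ) (χ x) = χ⁻¹ x := by
  rcases eq_or_ne x 0 with rfl | hx
  · rw [MulChar.map_zero, MulChar.map_zero, map_zero]
  · rw [MulChar.inv_apply_eq_inv']
    exact (Complex.inv_eq_conj (norm_mulChar χ (Units.mk0 x hx))).symm

lemma conj_gaussSum (χ : MulChar F ℂ) (ψ : AddChar F ℂ) :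
    (starRingEnd ℂ) (gaussSum χ ψ) = gaussSum χ⁻¹ ψ⁻¹ := by
  rw [gaussSum, gaussSum, map_sum]
  refine Finset.sum_congr rfl fun x _ => ?_
  rw [map_mul, conj_mulChar]
  congr 1
  have h : (0 : ℕ) < ringChar F := Nat.pos_of_ne_zero (CharP.ringChar_ne_zero_of_finite F)
  rw [AddChar.starComp_apply h]

lemma norm_gaussSum {χ : MulChar F ℂ} (hχ : χ ≠ 1) {ψ : AddChar F ℂ} (hψ : ψ.IsPrimitive) :
    ‖gaussSum χ ψ‖ = Real.sqrt (Fintype.card F) := by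
  have h := gaussSum_mul_gaussSum_eq_card hχ hψ
  rw [← conj_gaussSum, Complex.mul_conj] at h
  have h2 : Complex.normSq (gaussSum χ ψ) = Fintype.card F := by exact_mod_cast h
  rw [Complex.norm_def, h2]


/-- characters of order dividing m -/
noncomputable def X (F : Type*) [Field F] [Fintype F] [Fintype (MulChar F ℂ)] [DecidableEq (MulChar F ℂ)]
    (m : ℕ) : Finset (MulChar F ℂ) := univ.filter (fun χ => χ ^ m = 1)

lemma mem_X {m : ℕ} {χ : MulChar F ℂ} : χ ∈ X F m ↔ χ ^ m = 1 := by simp [X]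

lemma one_mem_X {m : ℕ} : (1 : MulChar F ℂ) ∈ X F m := mem_X.mpr (one_pow m)

lemma exists_char (m : ℕ) (u : Fˣ) (hu : ∀ x : Fˣ, x ^ m ≠ u) :
    ∃ χ : MulChar F ℂ, χ ^ m = 1 ∧ χ (u : F) ≠ 1 := by
  classical
  set R : Subgroup Fˣ := (powMonoidHom m : Fˣ →* Fˣ).range with hR
  have hune : (QuotientGroup.mk u : Fˣ ⧸ R) ≠ 1 := by
    rw [ne_eq, QuotientGroup.eq_one_iff]
    rintro ⟨x, hx⟩
    exact hu x hx
  haveI : NeZero ((Monoid.exponent (Fˣ ⧸ R) : ℂ)) :=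
    ⟨Nat.cast_ne_zero.mpr (Monoid.exponent_ne_zero_of_finite (G := Fˣ ⧸ R))⟩
  obtain ⟨φ, hφ⟩ := CommGroup.exists_apply_ne_one_of_hasEnoughRootsOfUnity (Fˣ ⧸ R) ℂ hune
  set φ' : Fˣ →* ℂˣ := φ.comp (QuotientGroup.mk' R) with hφ'
  refine ⟨MulChar.ofUnitHom φ', ?_, ?_⟩
  · ext x
    rw [MulChar.pow_apply_coe, MulChar.ofUnitHom_coe, MulChar.one_apply_coe]
    have h1 : (QuotientGroup.mk (x ^ m) : Fˣ ⧸ R) = 1 :=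
      (QuotientGroup.eq_one_iff _).mpr ⟨x, rfl⟩
    have h2 : φ' (x ^ m) = 1 := by
      simp only [φ', MonoidHom.comp_apply, QuotientGroup.mk'_apply, h1, map_one]
    rw [← Units.val_pow_eq_pow_val, ← map_pow, h2, Units.val_one]
  · rw [MulChar.ofUnitHom_coe]
    simp only [φ', MonoidHom.comp_apply, QuotientGroup.mk'_apply]
    intro h
    apply hφ
    ext
    exact h

lemma sum_pow_eq (f : Fˣ → ℂ) (m : ℕ) :
    ∑ x : Fˣ, f (x ^ m)
      = ∑ u : Fˣ, ((univ.filter (fun x : Fˣ => x ^ m = u)).card : ℂ) * f u := by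
  have h1 : ∀ x : Fˣ, f (x ^ m) = ∑ u : Fˣ, if x ^ m = u then f u else 0 := by
    intro x
    rw [Finset.sum_ite_eq univ (x ^ m) f, if_pos (mem_univ _)]
  rw [Finset.sum_congr rfl fun x _ => h1 x, Finset.sum_comm]
  refine Finset.sum_congr rfl fun u _ => ?_
  rw [← Finset.sum_filter, Finset.sum_const, nsmul_eq_mul]

lemma fiber_card_eq {m : ℕ} {v u : Fˣ} (h : v ^ m = u) :
    (univ.filter (fun x : Fˣ => x ^ m = u)).card
      = (univ.filter (fun x : Fˣ => x ^ m = 1)).card := by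
  refine Finset.card_bij' (fun x _ => x * v⁻¹) (fun y _ => y * v) ?_ ?_ ?_ ?_
  · intro x hx
    simp only [mem_filter, mem_univ, true_and] at hx ⊢
    rw [mul_pow, hx, ← h, inv_pow, mul_inv_cancel]
  · intro y hy
    simp only [mem_filter, mem_univ, true_and] at hy ⊢
    rw [mul_pow, hy, one_mul, h]
  · intro x _; rw [mul_assoc, inv_mul_cancel, mul_one]
  · intro y _; rw [mul_assoc, mul_inv_cancel, mul_one]

lemma card_X (m : ℕ) :
    (X F m).card = (univ.filter (fun x : Fˣ => x ^ m = 1)).card := by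
  obtain ⟨e⟩ := MulChar.mulEquiv_units F ℂ
  refine Finset.card_bij (fun χ _ => e χ) ?_ ?_ ?_
  · intro χ hχ
    simp only [mem_filter, mem_univ, true_and]
    rw [← map_pow, mem_X.mp hχ, map_one]
  · intro χ _ χ' _ h
    exact e.injective h
  · intro u hu
    refine ⟨e.symm u, ?_, by simp⟩
    rw [mem_X]
    have : u ^ m = 1 := (mem_filter.mp hu).2
    apply e.injective
    rw [map_pow, map_one]
    simp [this]

lemma card_roots_le {m : ℕ} (hm : m ≠ 0) :
    (univ.filter (fun x : Fˣ => x ^ m = 1)).card ≤ m := by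
  classical
  have hinj : ∀ x ∈ univ.filter (fun x : Fˣ => x ^ m = 1), (x : F) ∈
      (Polynomial.nthRoots m (1 : F)).toFinset := by
    intro x hx
    rw [Multiset.mem_toFinset, Polynomial.mem_nthRoots (Nat.pos_of_ne_zero hm)]
    have := (mem_filter.mp hx).2
    rw [← Units.val_pow_eq_pow_val, this, Units.val_one]
  calc (univ.filter (fun x : Fˣ => x ^ m = 1)).card
      ≤ (Polynomial.nthRoots m (1 : F)).toFinset.card :=
        Finset.card_le_card_of_injOn _ hinj (fun a _ b _ h => Units.ext h)
    _ ≤ Multiset.card (Polynomial.nthRoots m (1 : F)) := Multiset.toFinset_card_le _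
    _ ≤ m := Polynomial.card_nthRoots m 1

lemma sum_X_apply {m : ℕ} (u : Fˣ) :
    ∑ χ ∈ X F m, χ (u : F)
      = ((univ.filter (fun x : Fˣ => x ^ m = u)).card : ℂ) := by
  by_cases h : ∃ v : Fˣ, v ^ m = u
  · obtain ⟨v, hv⟩ := h
    have h1 : ∀ χ ∈ X F m, χ (u : F) = 1 := by
      intro χ hχ
      rw [← hv, Units.val_pow_eq_pow_val, map_pow, ← MulChar.pow_apply_coe,
        mem_X.mp hχ, MulChar.one_apply_coe]
    rw [Finset.sum_congr rfl h1, Finset.sum_const, nsmul_eq_mul, mul_one,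
      card_X, fiber_card_eq hv]
  · push_neg at h
    obtain ⟨χ₁, hχ₁X, hχ₁u⟩ := exists_char m u h
    have hfe : (univ.filter (fun x : Fˣ => x ^ m = u)) = ∅ := by
      rw [Finset.filter_eq_empty_iff]
      intro x _
      exact h x
    rw [hfe]
    have hre : ∑ χ ∈ X F m, (χ₁ * χ) (u : F) = ∑ χ ∈ X F m, χ (u : F) := by
      refine Finset.sum_bij' (fun χ _ => χ₁ * χ) (fun χ _ => χ₁⁻¹ * χ) ?_ ?_ ?_ ?_ ?_
      · intro χ hχ
        rw [mem_X, mul_pow, (mem_X.mp hχ), mul_one]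
        exact hχ₁X
      · intro χ hχ
        rw [mem_X, mul_pow, (mem_X.mp hχ), mul_one, inv_pow, hχ₁X, inv_one]
      · intro χ _; rw [← mul_assoc, inv_mul_cancel, one_mul]
      · intro χ _; rw [← mul_assoc, mul_inv_cancel, one_mul]
      · intro χ _
        rfl
    have h2 : ∑ χ ∈ X F m, (χ₁ * χ) (u : F) = χ₁ (u : F) * ∑ χ ∈ X F m, χ (u : F) := by
      rw [Finset.mul_sum]
      exact Finset.sum_congr rfl fun χ _ => by simp [MulChar.coeToFun_mul]
    have h3 : (χ₁ (u : F) - 1) * ∑ χ ∈ X F m, χ (u : F) = 0 := by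
      rw [sub_mul, one_mul, ← h2, hre, sub_self]
    rcases mul_eq_zero.mp h3 with h4 | h4
    · exact absurd (by linear_combination h4) hχ₁u
    · simp [h4]

lemma sum_units_add (f : F → ℂ) : ∑ x : F, f x = f 0 + ∑ x : Fˣ, f (x : F) := by
  rw [add_comm, ← Finset.sum_erase_add univ f (mem_univ 0)]
  congr 1
  refine (Finset.sum_bij' (fun (x : F) (hx : x ∈ univ.erase 0) => Units.mk0 x (Finset.mem_erase.mp hx).1)
    (fun (u : Fˣ) _ => (u : F)) ?_ ?_ ?_ ?_ ?_)
  · intro x hx; exact mem_univ _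
  · intro u _; exact Finset.mem_erase.mpr ⟨Units.ne_zero u, mem_univ _⟩
  · intro x hx; rfl
  · intro u _; exact Units.ext rfl
  · intro x hx; rfl

lemma S_eq (m : ℕ) (hm : m ≠ 0) {ψ : AddChar F ℂ} (hψ : ψ.IsPrimitive) (a : Fˣ) :
    ∑ x : F, ψ ((a : F) * x ^ m)
      = ∑ χ ∈ (X F m).erase 1, χ ((a⁻¹ : Fˣ) : F) * gaussSum χ ψ := by
  have key : ∀ χ : MulChar F ℂ,
      ∑ u : Fˣ, χ (u : F) * ψ ((a : F) * (u : F))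
        = ∑ x : F, χ x * ψ ((a : F) * x) := by
    intro χ
    rw [sum_units_add (fun x => χ x * ψ ((a : F) * x))]
    rw [MulChar.map_zero, zero_mul, zero_add]
  have hsplit := sum_units_add (fun x : F => ψ ((a : F) * x ^ m))
  have h0 : ψ ((a : F) * (0 : F) ^ m) = 1 := by
    rw [zero_pow hm, mul_zero, AddChar.map_zero_eq_one]
  have hunits : ∑ x : Fˣ, ψ ((a : F) * (x : F) ^ m)
      = ∑ χ ∈ X F m, ∑ u : Fˣ, χ (u : F) * ψ ((a : F) * (u : F)) := by
    have h1 : ∀ x : Fˣ, ψ ((a : F) * (x : F) ^ m) = ψ ((a : F) * ((x ^ m : Fˣ) : F)) := by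
      intro x; rw [Units.val_pow_eq_pow_val]
    rw [Finset.sum_congr rfl fun x _ => h1 x,
      sum_pow_eq (fun u : Fˣ => ψ ((a : F) * (u : F))) m]
    rw [Finset.sum_congr rfl fun u (_ : u ∈ univ) => by rw [← sum_X_apply u]]
    rw [Finset.sum_congr rfl fun u (_ : u ∈ univ) => Finset.sum_mul _ _ _]
    rw [Finset.sum_comm]
  -- the trivial character contributes -1
  have htriv : ∑ u : Fˣ, (1 : MulChar F ℂ) (u : F) * ψ ((a : F) * (u : F)) = -1 := by
    rw [key 1]
    have h2 : ∑ x : F, (1 : MulChar F ℂ) x * ψ ((a : F) * x)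
        = ∑ x : F, ψ (x * (a : F)) - 1 := by
      rw [sum_units_add (fun x : F => ψ (x * (a : F)))]
      rw [zero_mul, AddChar.map_zero_eq_one]
      rw [sum_units_add (fun x : F => (1 : MulChar F ℂ) x * ψ ((a : F) * x))]
      rw [MulChar.map_zero, zero_mul, zero_add]
      have : ∀ u : Fˣ, (1 : MulChar F ℂ) (u : F) * ψ ((a : F) * (u : F))
          = ψ ((u : F) * (a : F)) := by
        intro u
        rw [MulChar.one_apply_coe, one_mul, mul_comm]
      rw [Finset.sum_congr rfl fun u _ => this u]
      ring
    rw [h2, AddChar.sum_mulShift _ hψ, if_neg (Units.ne_zero a)]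
    ring
  have hnontriv : ∀ χ ∈ (X F m).erase 1,
      ∑ u : Fˣ, χ (u : F) * ψ ((a : F) * (u : F))
        = χ ((a⁻¹ : Fˣ) : F) * gaussSum χ ψ := by
    intro χ hχ
    rw [key χ]
    have hgs : ∑ x : F, χ x * ψ ((a : F) * x) = gaussSum χ (ψ.mulShift (a : F)) := by
      rw [gaussSum]
      exact Finset.sum_congr rfl fun x _ => by rw [AddChar.mulShift_apply]
    rw [hgs, ← gaussSum_mulShift χ ψ a, ← mul_assoc, ← map_mul]
    rw [show ((a⁻¹ : Fˣ) : F) * ((a : Fˣ) : F) = 1 by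
      rw [← Units.val_mul, inv_mul_cancel, Units.val_one], map_one, one_mul]
  rw [hsplit, h0, hunits, ← Finset.add_sum_erase _ _ (one_mem_X (m := m)), htriv,
    Finset.sum_congr rfl hnontriv]
  ring

lemma map_zero' (χ : MulChar F ℂ) : χ (0 : F) = 0 :=
  MulChar.map_nonunit χ not_isUnit_zero

lemma sum_pair (χ χ' : MulChar F ℂ) :
    ∑ a : Fˣ, (χ * χ'⁻¹) ((a⁻¹ : Fˣ) : F)
      = if χ = χ' then (Fintype.card Fˣ : ℂ) else 0 := by
  have hre : ∑ a : Fˣ, (χ * χ'⁻¹) ((a⁻¹ : Fˣ) : F) = ∑ b : Fˣ, (χ * χ'⁻¹) ((b : Fˣ) : F) :=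
    Fintype.sum_equiv (Equiv.inv Fˣ) _ _ (fun a => by simp)
  rw [hre]
  split_ifs with h
  · subst h
    have : ∀ b : Fˣ, (χ * χ⁻¹) ((b : Fˣ) : F) = 1 := by
      intro b
      rw [mul_inv_cancel χ, MulChar.one_apply_coe]
    rw [Finset.sum_congr rfl fun b _ => this b, Finset.sum_const, nsmul_eq_mul, mul_one]
    simp
  · have hne : χ * χ'⁻¹ ≠ 1 := by
      intro hc
      exact h (mul_inv_eq_one.mp hc)
    have h0 := MulChar.sum_eq_zero_of_ne_one hne
    rw [sum_units_add (fun x : F => (χ * χ'⁻¹) x), map_zero', zero_add] at h0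
    exact h0

lemma parseval (m : ℕ) (hm : m ≠ 0) {ψ : AddChar F ℂ} (hψ : ψ.IsPrimitive) :
    ∑ a : Fˣ, (∑ x : F, ψ ((a : F) * x ^ m))
        * (starRingEnd ℂ) (∑ x : F, ψ ((a : F) * x ^ m))
      = (((X F m).card - 1 : ℕ) : ℂ) * ((Fintype.card F : ℂ) * (Fintype.card Fˣ : ℂ)) := by
  have hconjS : ∀ a : Fˣ, (starRingEnd ℂ) (∑ x : F, ψ ((a : F) * x ^ m))
      = ∑ χ' ∈ (X F m).erase 1, χ'⁻¹ ((a⁻¹ : Fˣ) : F) * gaussSum χ'⁻¹ ψ⁻¹ := by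
    intro a
    rw [S_eq m hm hψ a, map_sum]
    exact Finset.sum_congr rfl fun χ' _ => by rw [map_mul, conj_mulChar, conj_gaussSum]
  have hterm : ∀ a : Fˣ,
      (∑ x : F, ψ ((a : F) * x ^ m)) * (starRingEnd ℂ) (∑ x : F, ψ ((a : F) * x ^ m))
        = ∑ χ ∈ (X F m).erase 1, ∑ χ' ∈ (X F m).erase 1,
            (gaussSum χ ψ * gaussSum χ'⁻¹ ψ⁻¹) * (χ * χ'⁻¹) ((a⁻¹ : Fˣ) : F) := by
    intro a
    rw [hconjS a, S_eq m hm hψ a, Finset.sum_mul_sum]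
    refine Finset.sum_congr rfl fun χ _ => Finset.sum_congr rfl fun χ' _ => ?_
    simp only [MulChar.coeToFun_mul, Pi.mul_apply]
    ring
  rw [Finset.sum_congr rfl fun a (_ : a ∈ univ) => hterm a]
  rw [Finset.sum_comm]
  have hinner : ∀ χ ∈ (X F m).erase 1,
      ∑ a : Fˣ, ∑ χ' ∈ (X F m).erase 1,
          (gaussSum χ ψ * gaussSum χ'⁻¹ ψ⁻¹) * (χ * χ'⁻¹) ((a⁻¹ : Fˣ) : F)
        = (Fintype.card F : ℂ) * (Fintype.card Fˣ : ℂ) := by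
    intro χ hχ
    rw [Finset.sum_comm]
    have h1 : ∀ χ' ∈ (X F m).erase 1,
        ∑ a : Fˣ, (gaussSum χ ψ * gaussSum χ'⁻¹ ψ⁻¹) * (χ * χ'⁻¹) ((a⁻¹ : Fˣ) : F)
          = if χ = χ' then (gaussSum χ ψ * gaussSum χ⁻¹ ψ⁻¹) * (Fintype.card Fˣ : ℂ) else 0 := by
      intro χ' _
      rw [← Finset.mul_sum, sum_pair χ χ']
      split_ifs with h
      · subst h; ring
      · ring
    rw [Finset.sum_congr rfl h1, Finset.sum_ite_eq _ χ
      (fun χ' => (gaussSum χ ψ * gaussSum χ⁻¹ ψ⁻¹) * (Fintype.card Fˣ : ℂ)), if_pos hχ]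
    rw [gaussSum_mul_gaussSum_eq_card (Finset.ne_of_mem_erase hχ) hψ]
  rw [Finset.sum_congr rfl hinner, Finset.sum_const, nsmul_eq_mul,
    Finset.card_erase_of_mem (one_mem_X (m := m))]


theorem sum_three_pow' {m : ℕ} (hm : m ≠ 0)
    (hq : ((m - 1 : ℕ)) ^ 4 < Fintype.card F) (c : F) :
    ∃ x y z : F, x ^ m + y ^ m + z ^ m = c := by
  by_contra hcon
  push_neg at hcon
  set ψ : AddChar F ℂ := AddChar.FiniteField.primitiveChar_to_Complex F with hψdef
  have hψ : ψ.IsPrimitive := AddChar.FiniteField.primitiveChar_to_Complex_isPrimitive F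
  set q := Fintype.card F with hqdef
  set S : F → ℂ := fun a => ∑ x : F, ψ (a * x ^ m) with hSdef
  set d := (X F m).card with hddef
  -- step 1 : orthogonality kills each triple
  have step1 : ∀ x y z : F, ∑ a : F, ψ (a * (x ^ m + y ^ m + z ^ m - c)) = 0 := by
    intro x y z
    have ht : x ^ m + y ^ m + z ^ m - c ≠ 0 := sub_ne_zero_of_ne (hcon x y z)
    have h := AddChar.sum_mulShift (x ^ m + y ^ m + z ^ m - c) hψ
    rw [if_neg ht] at h
    exact_mod_cast h
  -- step 2 : the full sum is zero
  have cube : ∀ a : F, ψ (a * (-c)) * (S a) ^ 3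
      = ∑ x : F, ∑ y : F, ∑ z : F, ψ (a * (x ^ m + y ^ m + z ^ m - c)) := by
    intro a
    have c1 : (S a) ^ 3 = ∑ x : F, ∑ y : F, ∑ z : F,
        ψ (a * x ^ m) * ψ (a * y ^ m) * ψ (a * z ^ m) := by
      rw [pow_succ, pow_two, hSdef]
      rw [Finset.sum_mul_sum, Finset.sum_mul]
      refine Finset.sum_congr rfl fun x _ => ?_
      rw [Finset.sum_mul]
      refine Finset.sum_congr rfl fun y _ => ?_
      rw [Finset.mul_sum]
    rw [c1, Finset.mul_sum]
    refine Finset.sum_congr rfl fun x _ => ?_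
    rw [Finset.mul_sum]
    refine Finset.sum_congr rfl fun y _ => ?_
    rw [Finset.mul_sum]
    refine Finset.sum_congr rfl fun z _ => ?_
    rw [show ψ (a * x ^ m) * ψ (a * y ^ m) * ψ (a * z ^ m)
        = ψ (a * x ^ m + a * y ^ m + a * z ^ m) by
      rw [AddChar.map_add_eq_mul, AddChar.map_add_eq_mul]]
    rw [← AddChar.map_add_eq_mul]
    congr 1
    ring
  have step2 : ∑ a : F, ψ (a * (-c)) * (S a) ^ 3 = 0 := by
    rw [Finset.sum_congr rfl fun a (_ : a ∈ univ) => cube a]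
    rw [Finset.sum_comm]
    rw [Finset.sum_congr rfl fun x (_ : x ∈ univ) => Finset.sum_comm]
    rw [Finset.sum_congr rfl fun x (_ : x ∈ univ) =>
      Finset.sum_congr rfl fun y (_ : y ∈ univ) => Finset.sum_comm]
    rw [Finset.sum_congr rfl fun x (_ : x ∈ univ) =>
      Finset.sum_congr rfl fun y (_ : y ∈ univ) =>
        Finset.sum_congr rfl fun z (_ : z ∈ univ) => step1 x y z]
    simp
  -- step 3 : separate the a = 0 term
  have hS0 : S 0 = (q : ℂ) := by
    simp [hSdef, AddChar.map_zero_eq_one, hqdef]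
  have step3 : ((q : ℂ)) ^ 3 = -∑ a : Fˣ, ψ ((a : F) * (-c)) * (S (a : F)) ^ 3 := by
    have h := sum_units_add (fun a : F => ψ (a * (-c)) * (S a) ^ 3)
    rw [step2] at h
    rw [zero_mul, AddChar.map_zero_eq_one, one_mul, hS0] at h
    linear_combination -h
  -- step 4 : pointwise bound
  have step4 : ∀ a : Fˣ, ‖S (a : F)‖ ≤ ((d - 1 : ℕ) : ℝ) * Real.sqrt q := by
    intro a
    rw [hSdef]
    dsimp only
    rw [S_eq m hm hψ a]
    refine le_trans (norm_sum_le _ _) ?_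
    have hb : ∀ χ ∈ (X F m).erase 1,
        ‖χ ((a⁻¹ : Fˣ) : F) * gaussSum χ ψ‖ = Real.sqrt q := by
      intro χ hχ
      rw [norm_mul, norm_mulChar χ a⁻¹, one_mul,
        norm_gaussSum (Finset.ne_of_mem_erase hχ) hψ]
    rw [Finset.sum_congr rfl hb, Finset.sum_const, nsmul_eq_mul,
      Finset.card_erase_of_mem (one_mem_X (m := m)), ← hddef]
  -- step 6 : Parseval
  have step6 : ∑ a : Fˣ, ‖S (a : F)‖ ^ 2
      = ((d - 1 : ℕ) : ℝ) * ((q : ℝ) * (Fintype.card Fˣ : ℝ)) := by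
    have hp := parseval m hm hψ
    have hterm : ∀ a : Fˣ, (∑ x : F, ψ ((a : F) * x ^ m))
        * (starRingEnd ℂ) (∑ x : F, ψ ((a : F) * x ^ m))
          = ((‖S (a : F)‖ ^ 2 : ℝ) : ℂ) := by
      intro a
      rw [Complex.mul_conj]
      norm_cast
      rw [Complex.normSq_eq_norm_sq]
    rw [Finset.sum_congr rfl fun a (_ : a ∈ univ) => hterm a] at hp
    rw [← Complex.ofReal_sum] at hp
    have : (((d - 1 : ℕ) : ℂ)) * ((q : ℂ) * ((Fintype.card Fˣ : ℕ) : ℂ))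
        = (((((d - 1 : ℕ) : ℝ)) * ((q : ℝ) * (Fintype.card Fˣ : ℝ)) : ℝ) : ℂ) := by
      push_cast
      ring
    rw [this] at hp
    exact_mod_cast hp
  -- step 5+7 : assemble the contradiction
  have hq1 : (1 : ℕ) ≤ q := Fintype.card_pos
  have hq2 : (2 : ℕ) ≤ q := Fintype.one_lt_card
  have hcu : Fintype.card Fˣ = q - 1 := Fintype.card_units F
  have hdm : d ≤ m := by
    rw [hddef, card_X m]
    exact card_roots_le hm
  have hd4 : ((d - 1 : ℕ)) ^ 4 ≤ q - 1 := by
    have h1 : d - 1 ≤ m - 1 := Nat.sub_le_sub_right hdm 1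
    calc (d - 1) ^ 4 ≤ (m - 1) ^ 4 := Nat.pow_le_pow_left h1 4
      _ ≤ q - 1 := Nat.le_sub_one_of_lt hq
  set Q : ℝ := (q : ℝ) with hQ
  set D : ℝ := ((d - 1 : ℕ) : ℝ) with hD
  have hQ2 : (2 : ℝ) ≤ Q := by rw [hQ]; exact_mod_cast hq2
  have hD0 : 0 ≤ D := Nat.cast_nonneg _
  have hU : (Fintype.card Fˣ : ℝ) = Q - 1 := by
    rw [hcu, hQ, Nat.cast_sub hq1, Nat.cast_one]
  have hD4 : D ^ 4 ≤ Q - 1 := by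
    rw [hD, hQ]
    have h3 := (Nat.cast_le (α := ℝ)).mpr hd4
    rwa [Nat.cast_pow, Nat.cast_sub hq1, Nat.cast_one] at h3
  have hDsq : D ^ 2 < Real.sqrt Q := by
    have h1 : D ^ 2 ≤ Real.sqrt (Q - 1) := by
      rw [show D ^ 2 = Real.sqrt ((D ^ 2) ^ 2) by
        rw [Real.sqrt_sq (by positivity)]]
      apply Real.sqrt_le_sqrt
      calc (D ^ 2) ^ 2 = D ^ 4 := by ring
        _ ≤ Q - 1 := hD4
    calc D ^ 2 ≤ Real.sqrt (Q - 1) := h1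
      _ < Real.sqrt Q := Real.sqrt_lt_sqrt (by linarith) (by linarith)
  -- chain of inequalities
  have hnorm3 : Q ^ 3 ≤ ∑ a : Fˣ, ‖S (a : F)‖ ^ 3 := by
    have h1 : ‖((q : ℂ)) ^ 3‖ = Q ^ 3 := by
      rw [norm_pow, Complex.norm_natCast]
    calc Q ^ 3 = ‖((q : ℂ)) ^ 3‖ := h1.symm
      _ = ‖∑ a : Fˣ, ψ ((a : F) * (-c)) * (S (a : F)) ^ 3‖ := by rw [step3, norm_neg]
      _ ≤ ∑ a : Fˣ, ‖ψ ((a : F) * (-c)) * (S (a : F)) ^ 3‖ := norm_sum_le _ _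
      _ = ∑ a : Fˣ, ‖S (a : F)‖ ^ 3 := by
          refine Finset.sum_congr rfl fun a _ => ?_
          rw [norm_mul, norm_addChar, one_mul, norm_pow]
  have hsum3 : ∑ a : Fˣ, ‖S (a : F)‖ ^ 3
      ≤ (D * Real.sqrt Q) * ∑ a : Fˣ, ‖S (a : F)‖ ^ 2 := by
    rw [Finset.mul_sum]
    refine Finset.sum_le_sum fun a _ => ?_
    have h1 : ‖S (a : F)‖ ^ 3 = ‖S (a : F)‖ * ‖S (a : F)‖ ^ 2 := by ring
    rw [h1]
    exact mul_le_mul_of_nonneg_right (step4 a) (by positivity)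
  have hfinal : Q ^ 3 ≤ (D * Real.sqrt Q) * (D * (Q * (Q - 1))) := by
    calc Q ^ 3 ≤ ∑ a : Fˣ, ‖S (a : F)‖ ^ 3 := hnorm3
      _ ≤ (D * Real.sqrt Q) * ∑ a : Fˣ, ‖S (a : F)‖ ^ 2 := hsum3
      _ = (D * Real.sqrt Q) * (D * (Q * (Q - 1))) := by rw [step6, hU]
  have hsq : Real.sqrt Q * Real.sqrt Q = Q := Real.mul_self_sqrt (by linarith)
  have hsqpos : 0 < Real.sqrt Q := Real.sqrt_pos.mpr (by linarith)
  have hposmul : (0:ℝ) < Real.sqrt Q * (Q * (Q - 1)) :=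
    mul_pos hsqpos (mul_pos (by linarith) (by linarith))
  nlinarith [hfinal, hDsq, hsq, hsqpos, hQ2, hD0,
    mul_lt_mul_of_pos_right hDsq hposmul]
end MonDG


theorem MonDG.sum_three_pow {F : Type*} [Field F] [Fintype F] {m : ℕ} (hm : m ≠ 0)
    (hq : ((m - 1 : ℕ)) ^ 4 < Fintype.card F) (c : F) :
    ∃ x y z : F, x ^ m + y ^ m + z ^ m = c := by
  classical
  letI : Fintype (MulChar F ℂ) := Fintype.ofFinite _
  exact MonDG.sum_three_pow' hm hq c

lemma MonDG.walk13 {F : Type*} [Field F] (m n : ℕ) (hm : m ≠ 0) (hn : n ≠ 0)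
    (h3 : ∀ c : F, ∃ x y z : F, x ^ m + y ^ m + z ^ m = c) (u v : F × F) :
    walkLen (monomialArc (F := F) m n) 13 u v := by
  obtain ⟨a, b⟩ := u
  obtain ⟨c₀, d₀⟩ := v
  obtain ⟨x, y, z, hxyz⟩ := h3 (d₀ + b)
  refine ⟨(0, -b), ?_, (x, b), ?_, (1, x^m - b), ?_, (0, b - x^m), ?_, (0, x^m - b), ?_,
    (y, b - x^m), ?_, (1, x^m + y^m - b), ?_, (0, b - x^m - y^m), ?_, (0, x^m + y^m - b), ?_,
    (z, b - x^m - y^m), ?_, (1, x^m + y^m + z^m - b), ?_, (0, -d₀), ?_, (c₀, d₀), ?_, rfl⟩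
  all_goals simp only [monomialArc, zero_pow hm, zero_pow hn, one_pow, zero_mul, mul_zero, mul_one]
  all_goals try ring1
  all_goals linear_combination hxyz

end Auxiliary

theorem diam_le_13 {p e m n : ℕ} (hp : p.Prime) (he : 0 < e)
    (F : Type*) [Field F] [Fintype F] (hF : Fintype.card F = p ^ e)
    (hm : 1 ≤ m) (hmn : m ≤ n) (hn : n ≤ p ^ e - 1)
    (hstrong : IsStrongDigraph (monomialArc (F := F) m n))
    (hq : (m - 1) ^ 4 < p ^ e) :
    ddiam (monomialArc (F := F) m n) ≤ 13 := by
  have hm0 : m ≠ 0 := by omega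
  have hn0 : n ≠ 0 := by
    intro h
    omega
  have hq' : ((m - 1 : ℕ)) ^ 4 < Fintype.card F := by rw [hF]; exact hq
  have h3 : ∀ c : F, ∃ x y z : F, x ^ m + y ^ m + z ^ m = c := fun c =>
    MonDG.sum_three_pow hm0 hq' c
  have hwalk := MonDG.walk13 (F := F) m n hm0 hn0 h3
  refine iSup_le fun u => iSup_le fun v => ?_
  have hmem : 13 ∈ {k : ℕ | walkLen (monomialArc (F := F) m n) k u v} := hwalk u v
  refine le_trans (iInf₂_le 13 hmem) ?_
  norm_num
end
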